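/- arXiv:math/0103149 — 4 statements merged into one kernel-verified Lean document; each statement's English description precedes it below -/
import Mathlib

section
/- For n ≥ 1 and 1 ≤ k < n, the coefficient A_k^{(n)} defined by the expansion g_n(x) = Σ_{k=0}^{n-1} A_k^{(n)} (α−β)^{−k} (x−β)^k equals (n−k) Σ_{j=1}^{k} (1/j) C(n−1, j−1) C(k−1, j−1) α^j β^{n−j}, and A_0^{(n)} = β^n. -/
open Polynomial Finset

-- core combinatorial lemma
lemma core {K : Type*} [Field K] [CharZero K] (N M i : ℕ) :
    ((i : K) + 1) * ((N.choose (i+1) : K) * (M.choose i : K)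
        - (N.choose i : K) * (M.choose (i+1) : K))
      = ((N : K) - (M : K)) * (N.choose i : K) * (M.choose i : K) := by
  have hN := Nat.choose_succ_right_eq N i
  have hM := Nat.choose_succ_right_eq M i
  rcases le_or_gt i M with hiM | hiM
  · rcases le_or_gt i N with hiN | hiN
    · have h1 : (N.choose (i+1) : K) * ((i:K)+1) = (N.choose i : K) * ((N:K) - i) := by
        have := congrArg (Nat.cast (R := K)) hN
        push_cast [Nat.cast_sub hiN] at this
        exact this
      have h2 : (M.choose (i+1) : K) * ((i:K)+1) = (M.choose i : K) * ((M:K) - i) := by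
        have := congrArg (Nat.cast (R := K)) hM
        push_cast [Nat.cast_sub hiM] at this
        exact this
      linear_combination (M.choose i : K) * h1 - (N.choose i : K) * h2
    · have hz1 : N.choose i = 0 := Nat.choose_eq_zero_of_lt hiN
      have hz2 : N.choose (i+1) = 0 := Nat.choose_eq_zero_of_lt (by omega)
      simp [hz1, hz2]
  · have hz1 : M.choose i = 0 := Nat.choose_eq_zero_of_lt hiM
    have hz2 : M.choose (i+1) = 0 := Nat.choose_eq_zero_of_lt (by omega)
    simp [hz1, hz2]

lemma perj {K : Type*} [Field K] [CharZero K] (N M i : ℕ) :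
    ((N:K) - M) * (((i:K)+1)⁻¹ * ((N+1).choose i : K) * ((M+1).choose i : K))
      = ((N:K) - M + 1) * (((i:K)+1)⁻¹ * ((N+1).choose i : K) * (M.choose i : K))
        + ((N:K) - M) * ((i:K)⁻¹ * (N.choose (i-1) : K) * (M.choose (i-1) : K))
        - ((N:K) - M) * (((i:K)+1)⁻¹ * (N.choose i : K) * (M.choose i : K))
        + ((N:K) - M - 1) * (((i:K)+1)⁻¹ * (N.choose i : K) * ((M+1).choose i : K)) := by
  rcases i with _ | t
  · simp
  · have h1 : ((t:K) + 1) ≠ 0 := Nat.cast_add_one_ne_zero t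
    have h2 : ((t:K) + 1 + 1) ≠ 0 := by
      have := Nat.cast_add_one_ne_zero (R := K) (t+1)
      push_cast at this; exact this
    have hcore := core (K := K) N M t
    have hu : ((t:K)+1) * ((t:K)+1)⁻¹ = 1 := mul_inv_cancel₀ h1
    have hv : ((t:K)+1+1) * ((t:K)+1+1)⁻¹ = 1 := mul_inv_cancel₀ h2
    push_cast [Nat.choose_succ_succ, Nat.add_sub_cancel]
    linear_combination
      (((t:K)+1)⁻¹ * ((t:K)+1+1)⁻¹) * hcore
      + (-(((t:K)+1+1)⁻¹ * ((N.choose (t+1) : K) * (M.choose t : K)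
            - (N.choose t : K) * (M.choose (t+1) : K)))
         - ((N:K) - M) * (N.choose t : K) * (M.choose t : K) * ((t:K)+1+1)⁻¹) * hu
      + (((N:K) - M) * (N.choose t : K) * (M.choose t : K) * ((t:K)+1)⁻¹) * hv

noncomputable def Fc {K : Type*} [Field K] (α β : K) (n k : ℕ) : K :=
  ((n:K) - k) * ∑ j ∈ Finset.Icc 1 k,
    (j:K)⁻¹ * ((n-1).choose (j-1) : K) * ((k-1).choose (j-1) : K) * α^j * β^(n-j)

lemma Fstep {K : Type*} [Field K] [CharZero K] (α β : K) (N M : ℕ) (h : M + 1 ≤ N) :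
    Fc α β (N+2) (M+2) = Fc α β (N+2) (M+1) + (α - β) * Fc α β (N+1) (M+1)
      + β * Fc α β (N+1) (M+2) := by
  simp only [Fc, ← Finset.Ico_add_one_right_eq_Icc, Finset.sum_Ico_eq_sum_range]
  simp only [Nat.add_sub_cancel, Nat.succ_sub_succ, Nat.add_sub_cancel_left]
  norm_num
  have e1 : ∀ x : ℕ, N + 2 - (1 + x) = N + 1 - x := fun x => by omega
  have e2 : ∀ x : ℕ, N + 1 - (1 + x) = N - x := fun x => by omega
  simp only [e1, e2]
  have hL : ((N:K) - M) * ∑ x ∈ Finset.range (M+2),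
        (1 + (x:K))⁻¹ * ((N+1).choose x : K) * ((M+1).choose x : K) * α^(1+x) * β^(N+1-x)
      = ∑ x ∈ Finset.range (M+2), ((N:K) - M) *
        ((1 + (x:K))⁻¹ * ((N+1).choose x : K) * ((M+1).choose x : K) * α^(1+x) * β^(N+1-x)) :=
    Finset.mul_sum _ _ _
  have h2 : ((N:K) + 2 - ((M:K)+1)) * ∑ x ∈ Finset.range (M+1),
        (1 + (x:K))⁻¹ * ((N+1).choose x : K) * (M.choose x : K) * α^(1+x) * β^(N+1-x)
      = ∑ x ∈ Finset.range (M+2), ((N:K) + 2 - ((M:K)+1)) *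
        ((1 + (x:K))⁻¹ * ((N+1).choose x : K) * (M.choose x : K) * α^(1+x) * β^(N+1-x)) := by
    rw [← Finset.mul_sum]
    conv_rhs => rw [Finset.sum_range_succ]
    simp [Nat.choose_succ_self]
  have h3 : (α - β) * (((N:K) - M) * ∑ x ∈ Finset.range (M+1),
        (1 + (x:K))⁻¹ * (N.choose x : K) * (M.choose x : K) * α^(1+x) * β^(N-x))
      = ∑ x ∈ Finset.range (M+2), ((N:K) - M) *
        (((x:K))⁻¹ * (N.choose (x-1) : K) * (M.choose (x-1) : K) * α^(1+x) * β^(N+1-x)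
          - (1 + (x:K))⁻¹ * (N.choose x : K) * (M.choose x : K) * α^(1+x) * β^(N+1-x)) := by
    have hV : ∑ x ∈ Finset.range (M+2),
          ((x:K))⁻¹ * (N.choose (x-1) : K) * (M.choose (x-1) : K) * α^(1+x) * β^(N+1-x)
        = α * ∑ x ∈ Finset.range (M+1),
          (1 + (x:K))⁻¹ * (N.choose x : K) * (M.choose x : K) * α^(1+x) * β^(N-x) := by
      rw [Finset.sum_range_succ']
      simp only [Nat.cast_zero, inv_zero, zero_mul, mul_zero, add_zero, zero_add]
      rw [Finset.mul_sum]
      refine Finset.sum_congr rfl fun x hx => ?_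
      have e3 : N + 1 - (x+1) = N - x := by omega
      have e4 : (x + 1) - 1 = x := by omega
      rw [e3, e4]
      push_cast
      have : α ^ (1 + (x+1)) = α * α ^ (1+x) := by ring
      rw [this]; ring
    have hW : ∑ x ∈ Finset.range (M+2),
          (1 + (x:K))⁻¹ * (N.choose x : K) * (M.choose x : K) * α^(1+x) * β^(N+1-x)
        = β * ∑ x ∈ Finset.range (M+1),
          (1 + (x:K))⁻¹ * (N.choose x : K) * (M.choose x : K) * α^(1+x) * β^(N-x) := by
      rw [Finset.sum_range_succ]
      simp only [Nat.choose_succ_self, Nat.cast_zero, mul_zero, zero_mul, add_zero]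
      rw [Finset.mul_sum]
      refine Finset.sum_congr rfl fun x hx => ?_
      have hxM : x ≤ M := by simpa [Nat.lt_succ_iff] using hx
      have e5 : N + 1 - x = (N - x) + 1 := by omega
      rw [e5, pow_succ]
      ring
    simp only [mul_sub]
    rw [Finset.sum_sub_distrib, ← Finset.mul_sum, ← Finset.mul_sum, hV, hW]
    ring
  have h4 : β * (((N:K) + 1 - ((M:K)+2)) * ∑ x ∈ Finset.range (M+2),
        (1 + (x:K))⁻¹ * (N.choose x : K) * ((M+1).choose x : K) * α^(1+x) * β^(N-x))
      = ∑ x ∈ Finset.range (M+2), ((N:K) + 1 - ((M:K)+2)) *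
        ((1 + (x:K))⁻¹ * (N.choose x : K) * ((M+1).choose x : K) * α^(1+x) * β^(N+1-x)) := by
    have : ∑ x ∈ Finset.range (M+2),
          (1 + (x:K))⁻¹ * (N.choose x : K) * ((M+1).choose x : K) * α^(1+x) * β^(N+1-x)
        = β * ∑ x ∈ Finset.range (M+2),
          (1 + (x:K))⁻¹ * (N.choose x : K) * ((M+1).choose x : K) * α^(1+x) * β^(N-x) := by
      rw [Finset.mul_sum]
      refine Finset.sum_congr rfl fun x hx => ?_
      have hxM : x ≤ M + 1 := by simpa [Nat.lt_succ_iff] using hx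
      have e5 : N + 1 - x = (N - x) + 1 := by omega
      rw [e5, pow_succ]
      ring
    rw [← Finset.mul_sum, this]
    ring
  rw [hL, h2, h3, h4, ← Finset.sum_add_distrib, ← Finset.sum_add_distrib]
  refine Finset.sum_congr rfl fun x hx => ?_
  have := perj (K := K) N M x
  linear_combination (α^(1+x) * β^(N+1-x)) * this

theorem stmt4 {K : Type*} [Field K] [CharZero K] (α β : K) (hαβ : α ≠ β)
    (g : ℕ → Polynomial K) (hg0 : g 0 = 1)
    (hrec : ∀ n : ℕ, 1 ≤ n →
      (Polynomial.X - Polynomial.C α) * Polynomial.C ((α - β) ^ (n - 1)) * g n =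
        Polynomial.C α * (Polynomial.X - Polynomial.C β) ^ n * Polynomial.C ((g (n - 1)).eval α) -
          Polynomial.X * Polynomial.C ((α - β) ^ n) * g (n - 1))
    (A : ℕ → ℕ → K)
    (hA : ∀ n : ℕ, 1 ≤ n →
      g n = ∑ k ∈ Finset.range n,
        Polynomial.C (A n k * ((α - β)⁻¹) ^ k) * (Polynomial.X - Polynomial.C β) ^ k) :
    ∀ n : ℕ, 1 ≤ n →
      A n 0 = β ^ n ∧
        ∀ k : ℕ, 1 ≤ k → k < n →
          A n k = ((n : K) - (k : K)) * ∑ j ∈ Finset.Icc 1 k,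
            (j : K)⁻¹ * ((n - 1).choose (j - 1) : K) * ((k - 1).choose (j - 1) : K) *
              α ^ j * β ^ (n - j) := by
  have ht : (α - β) ≠ 0 := sub_ne_zero.mpr hαβ
  set T : ℕ → Polynomial K := fun n => (g n).comp (X + C β) with hT
  -- coefficients of T n from hA
  have hbn : ∀ n : ℕ, 1 ≤ n → ∀ k : ℕ,
      (T n).coeff k = if k < n then A n k * ((α - β)⁻¹) ^ k else 0 := by
    intro n hn k
    have h1 : T n = ∑ i ∈ Finset.range n, C (A n i * ((α - β)⁻¹) ^ i) * X ^ i := by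
      rw [hT]
      simp only [hA n hn]
      rw [Polynomial.sum_comp]
      refine Finset.sum_congr rfl fun i hi => ?_
      simp [mul_comp, pow_comp, sub_comp]
    rw [h1, Polynomial.finset_sum_coeff]
    simp only [Polynomial.coeff_C_mul, Polynomial.coeff_X_pow]
    rw [Finset.sum_congr rfl (fun i _ => by rw [mul_ite, mul_one, mul_zero])]
    rw [Finset.sum_ite_eq (Finset.range n) k]
    simp [Finset.mem_range]
  have hb00 : (T 0).coeff 0 = 1 := by rw [hT]; simp [hg0]
  -- transformed recurrence
  have key : ∀ n : ℕ, 1 ≤ n →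
      X * (C ((α - β) ^ (n-1)) * T n) + (C (β * (α-β)^(n-1)) - C (α * (α-β)^(n-1))) * T n
        = C α * X ^ n * C ((g (n-1)).eval α)
          - (X * (C ((α - β) ^ n) * T (n-1)) + C (β * (α-β)^n) * T (n-1)) := by
    intro n hn
    have h := congrArg (fun p : Polynomial K => p.comp (X + C β)) (hrec n hn)
    simp only [sub_comp, mul_comp, add_comp, pow_comp, C_comp, X_comp,
      add_sub_cancel_right] at h
    simp only [C_mul]
    linear_combination h
  -- recurrence at coefficient 0
  have hbrec0 : ∀ n : ℕ, 1 ≤ n → (T n).coeff 0 = β * (T (n-1)).coeff 0 := by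
    intro n hn
    rcases n with _ | m
    · omega
    have h := congrArg (fun p : Polynomial K => p.coeff 0) (key (m+1) hn)
    simp only [sub_mul, Polynomial.coeff_add, Polynomial.coeff_sub, Polynomial.mul_coeff_zero,
      Polynomial.coeff_X_zero, Polynomial.coeff_C, Polynomial.coeff_X_pow,
      Nat.add_sub_cancel, zero_mul, mul_zero, zero_add, zero_sub] at h
    have hne : ¬ ((0:ℕ) = m + 1) := by omega
    rw [if_neg hne] at h
    norm_num at h
    have hm' : -((α - β) ^ (m+1)) ≠ 0 := by
      simpa using pow_ne_zero (m+1) ht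
    apply mul_left_cancel₀ hm'
    simp only [Nat.add_sub_cancel]
    linear_combination h
  -- main coefficient recurrence
  have hbrec : ∀ n k : ℕ, k + 2 ≤ n + 1 →
      (α-β)^(k+1) * (T (n+1)).coeff (k+1)
        = (α-β)^k * (T (n+1)).coeff k + (α - β) * ((α-β)^k * (T n).coeff k)
          + β * ((α-β)^(k+1) * (T n).coeff (k+1)) := by
    intro n k hk
    have h := congrArg (fun p : Polynomial K => p.coeff (k+1)) (key (n+1) (by omega))
    have hne : ¬ ((k+1:ℕ) = n+1) := by omega
    simp only [sub_mul, Polynomial.coeff_add, Polynomial.coeff_sub, Polynomial.coeff_X_mul,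
      Polynomial.coeff_C_mul, Polynomial.coeff_mul_C, Polynomial.coeff_X_pow,
      Nat.add_sub_cancel, if_neg hne, mul_zero, zero_mul] at h
    -- h : t^n * b(n+1) k + (β*t^n - α*t^n) * b(n+1)(k+1) = 0 - (t^(n+1) * b n k + β*t^(n+1)*b n (k+1))
    have hm : (α - β) ^ n ≠ 0 := pow_ne_zero _ ht
    have h' : (T (n+1)).coeff k + (β - α) * (T (n+1)).coeff (k+1)
        = -((α-β) * (T n).coeff k) - β * ((α-β) * (T n).coeff (k+1)) := by
      apply mul_left_cancel₀ hm
      linear_combination h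
    linear_combination (-(α-β)^k) * h'
  -- boundary identity for k = 1
  have hk1 : ∀ m : ℕ, β^(m+2) + (α-β)*β^(m+1) + β * Fc α β (m+1) 1 = Fc α β (m+2) 1 := by
    intro m
    have h1 : Fc α β (m+1) 1 = ((m:K)+1-1) * (α * β^m) := by
      simp [Fc]
    have h2 : Fc α β (m+2) 1 = ((m:K)+2-1) * (α * β^(m+1)) := by
      simp [Fc]
    rw [h1, h2]
    ring
  have claim : ∀ n : ℕ, 1 ≤ n → ∀ k : ℕ, k ≤ n →
      (α-β)^k * (T n).coeff k = (if k = 0 then β^n else Fc α β n k) := by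
    refine Nat.le_induction ?_ ?_
    · intro k hk
      interval_cases k
      · simp [hbrec0 1 le_rfl, hb00]
      · rw [hbn 1 le_rfl 1]
        simp [Fc]
    · intro n hn ih k hk
      induction k with
      | zero =>
        have h0 := hbrec0 (n+1) (by omega)
        simp only [Nat.add_sub_cancel] at h0
        have h1 := ih 0 (by omega)
        simp only [pow_zero, one_mul] at h1 ⊢
        rw [h0, h1]
        simp [pow_succ, mul_comm]
      | succ k ihk =>
        rcases Nat.lt_or_ge k n with hkn | hkn
        · -- k + 1 ≤ n
          have h1 := hbrec n k (by omega)
          rw [ihk (by omega), ih k (by omega), ih (k+1) (by omega)] at h1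
          rw [h1]
          rcases k with _ | j
          · -- k = 0
            simp only [if_pos rfl, if_neg (Nat.succ_ne_zero 0)]
            rcases n with _ | m
            · omega
            · exact hk1 m
          · simp only [if_neg (Nat.succ_ne_zero _)]
            rcases n with _ | N
            · omega
            · have hj : j + 1 ≤ N := by omega
              linear_combination (-1 : K) * Fstep α β N j hj
        · -- k + 1 = n + 1
          have hkeq : k + 1 = n + 1 := by omega
          rw [hbn (n+1) (by omega) (k+1), if_neg (by omega)]
          rw [if_neg (Nat.succ_ne_zero _), hkeq]
          simp [Fc]
  refine fun n hn => ⟨?_, ?_⟩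
  · have h0 := claim n hn 0 (by omega)
    rw [hbn n hn 0, if_pos (by omega), if_pos rfl] at h0
    simpa using h0
  · intro k hk1 hkn
    have h1 := claim n hn k (by omega)
    rw [hbn n hn k, if_pos hkn, if_neg (by omega : ¬ k = 0)] at h1
    have h2 : (α-β)^k * (A n k * ((α-β)⁻¹)^k) = A n k := by
      rw [inv_pow, mul_left_comm, mul_inv_cancel₀ (pow_ne_zero _ ht), mul_one]
    rw [h2] at h1
    rw [h1]
    simp [Fc]
end

section
/- Lagrange inversion consequence: if y = tΦ(y) with Φ(y) = ((α−β)yw + β)/(1−yw), then [t^n] 1/(1−y(t)) = (1/n)[z^{n−1}] (Φ(z))^n / (1−z)² for all n ≥ 1. -/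
open PowerSeries Finset

namespace Stmt10Aux
variable {K : Type*} [Field K] [CharZero K]

lemma resid (u : PowerSeries K) (hu0 : PowerSeries.constantCoeff u ≠ 0) (r : ℕ) :
    coeff r (u⁻¹ ^ (r + 1) * d⁄dX K (X * u)) = if r = 0 then 1 else 0 := by
  have hvu : u⁻¹ * u = 1 := PowerSeries.inv_mul_cancel u hu0
  have hdy : d⁄dX K (X * u) = X * d⁄dX K u + u := by
    rw [Derivation.leibniz]
    simp [smul_eq_mul, mul_comm]
  rcases r with _ | s
  · rw [if_pos rfl, pow_one, hdy, mul_add, map_add, hvu,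
      coeff_zero_eq_constantCoeff, map_mul, map_mul, constantCoeff_X]
    simp
  · rw [if_neg (Nat.succ_ne_zero s)]
    have hps : u⁻¹ ^ (s + 1 + 1) * u = u⁻¹ ^ (s + 1) := by
      rw [pow_succ, mul_assoc, hvu, mul_one]
    have h1 : u⁻¹ ^ (s + 1 + 1) * d⁄dX K (X * u)
        = X * (u⁻¹ ^ (s + 2) * d⁄dX K u) + u⁻¹ ^ (s + 1) := by
      rw [hdy, mul_add, hps]; ring
    have hderiv : d⁄dX K (u⁻¹ ^ (s + 1)) = -((s + 1 : ℕ) • (u⁻¹ ^ (s + 2) * d⁄dX K u)) := by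
      rw [Derivation.leibniz_pow]
      simp only [Nat.succ_sub_one, derivative_inv', smul_eq_mul]
      rw [← neg_nsmul]
      congr 1
      ring
    have hc : coeff s (d⁄dX K (u⁻¹ ^ (s + 1))) = coeff (s + 1) (u⁻¹ ^ (s + 1)) * (s + 1) :=
      coeff_derivative _ s
    rw [hderiv] at hc
    rw [h1, map_add, coeff_succ_X_mul]
    have hs1 : ((s : K) + 1) ≠ 0 := by
      have := Nat.cast_ne_zero (R := K).mpr (Nat.succ_ne_zero s)
      push_cast at this
      exact this
    rw [map_neg, map_nsmul, nsmul_eq_mul] at hc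
    push_cast at hc
    have : coeff s (u⁻¹ ^ (s + 2) * d⁄dX K u) = -(coeff (s + 1) (u⁻¹ ^ (s + 1))) := by
      apply mul_left_cancel₀ hs1
      linear_combination -hc
    rw [this]; ring

lemma lagrange_pow (u : PowerSeries K) (hu0 : PowerSeries.constantCoeff u ≠ 0)
    (q : ℕ → K) (km M : ℕ) (S : PowerSeries K)
    (hsub : u ^ (km + M + 1)
      = (∑ j ∈ range (M + 1), PowerSeries.C (q j) * (X * u) ^ j) + (X * u) ^ (M + 1) * S) :
    ((km + M + 1 : ℕ) : K) * coeff (km + M + 1) ((X * u) ^ (km + 1))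
      = ((km + 1 : ℕ) : K) * q M := by
  set y := X * u with hy
  set v := u⁻¹ with hv
  have hvu : v * u = 1 := PowerSeries.inv_mul_cancel u hu0
  set n := km + M + 1 with hn
  have huv1 : u ^ n * v ^ n = 1 := by rw [← mul_pow, mul_comm, hvu, one_pow]
  set z := y ^ km * d⁄dX K y with hz
  have hcoeff : coeff (km + M) z = q M := by
    have hrw : z = v ^ n * z * u ^ n := by
      rw [mul_comm (v ^ n) z, mul_assoc, mul_comm (v ^ n), huv1, mul_one]
    rw [hrw, hsub, mul_add, Finset.mul_sum, map_add, map_sum]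
    have hB : coeff (km + M) (v ^ n * z * (y ^ (M + 1) * S)) = 0 := by
      have h1 : v ^ n * z * (y ^ (M + 1) * S) = X ^ n * (d⁄dX K y * S) := by
        have h2 : y ^ km * y ^ (M + 1) = y ^ n := by rw [← pow_add]; congr 1
        have h3 : y ^ n * v ^ n = X ^ n := by
          rw [← mul_pow, hy, mul_assoc, mul_comm u v, hvu, mul_one]
        calc v ^ n * z * (y ^ (M + 1) * S)
            = (y ^ km * y ^ (M + 1)) * v ^ n * (d⁄dX K y * S) := by rw [hz]; ring
          _ = X ^ n * (d⁄dX K y * S) := by rw [h2, h3]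
      rw [h1, coeff_X_pow_mul']
      simp only [hn]
      rw [if_neg (by omega)]
    rw [hB, add_zero]
    have hterm : ∀ j ∈ range (M + 1),
        coeff (km + M) (v ^ n * z * (PowerSeries.C (q j) * y ^ j))
          = if j = M then q j else 0 := by
      intro j hj
      rw [mem_range] at hj
      obtain ⟨r, hr⟩ : ∃ r, j + r = M := ⟨M - j, by omega⟩
      have h4 : v ^ n * z * (PowerSeries.C (q j) * y ^ j)
          = PowerSeries.C (q j) * (X ^ (km + j) * (v ^ (r + 1) * d⁄dX K y)) := by
        have h5 : y ^ (km + j) * v ^ n = X ^ (km + j) * v ^ (r + 1) := by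
          have h6 : n = (km + j) + (r + 1) := by omega
          rw [h6, pow_add v, hy, mul_pow, mul_assoc, ← mul_assoc (u ^ (km + j)),
            ← mul_pow, mul_comm u v, hvu, one_pow, one_mul]
        calc v ^ n * z * (PowerSeries.C (q j) * y ^ j)
            = PowerSeries.C (q j) * ((y ^ km * y ^ j) * v ^ n * d⁄dX K y) := by rw [hz]; ring
          _ = PowerSeries.C (q j) * (y ^ (km + j) * v ^ n * d⁄dX K y) := by rw [← pow_add]
          _ = _ := by rw [h5, mul_assoc]
      rw [h4, coeff_C_mul]
      have h7 : km + M = r + (km + j) := by omega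
      rw [h7, coeff_X_pow_mul, hy, hv, resid u hu0 r]
      by_cases hjm : j = M
      · rw [if_pos hjm, if_pos (by omega), mul_one]
      · rw [if_neg hjm, if_neg (by omega), mul_zero]
    rw [Finset.sum_congr rfl hterm, Finset.sum_ite_eq' (range (M + 1)) M q,
      if_pos (by simp)]
  have hder : coeff (km + M) (d⁄dX K (y ^ (km + 1)))
      = coeff (km + M + 1) (y ^ (km + 1)) * ((km + M : ℕ) + 1) :=
    coeff_derivative _ _
  have hlp : d⁄dX K (y ^ (km + 1)) = (km + 1) • (y ^ km • d⁄dX K y) := by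
    simpa using Derivation.leibniz_pow (D := d⁄dX K) (a := y) (km + 1)
  rw [hlp, map_nsmul, smul_eq_mul, ← hz, hcoeff, nsmul_eq_mul] at hder
  simp only [hn]
  push_cast at hder ⊢
  linear_combination -hder

lemma subst_trunc (a b w : K) (y u : PowerSeries K) (hyu : y = X * u)
    (hu : u * (1 - PowerSeries.C w * y) = PowerSeries.C a * y + PowerSeries.C b)
    (n M : ℕ) :
    ∃ S, u ^ n = (∑ j ∈ range (M + 1),
        PowerSeries.C (coeff j (((PowerSeries.C a * X + PowerSeries.C b) *
          (1 - PowerSeries.C w * X)⁻¹) ^ n)) * y ^ j)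
      + y ^ (M + 1) * S := by
  set Φ : PowerSeries K := (PowerSeries.C a * X + PowerSeries.C b) *
    (1 - PowerSeries.C w * X)⁻¹ with hΦ
  have hden : PowerSeries.constantCoeff (1 - PowerSeries.C w * X) ≠ 0 := by
    simp
  have hΦmul : Φ * (1 - PowerSeries.C w * X) = PowerSeries.C a * X + PowerSeries.C b := by
    rw [hΦ, mul_assoc, PowerSeries.inv_mul_cancel _ hden, mul_one]
  have hΦn : Φ ^ n * (1 - PowerSeries.C w * X) ^ n
      = (PowerSeries.C a * X + PowerSeries.C b) ^ n := by
    rw [← mul_pow, hΦmul]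
  set Q : Polynomial K := trunc (M + 1) (Φ ^ n) with hQ
  have hdvd1 : (X : PowerSeries K) ^ (M + 1) ∣ Φ ^ n - ↑Q := by
    rw [PowerSeries.X_pow_dvd_iff]
    intro m hm
    rw [map_sub, Polynomial.coeff_coe, hQ, coeff_trunc, if_pos hm, sub_self]
  set PN : Polynomial K := (Polynomial.C a * Polynomial.X + Polynomial.C b) ^ n with hPN
  set PD : Polynomial K := (1 - Polynomial.C w * Polynomial.X) ^ n with hPD
  have hcoePN : ((PN : Polynomial K) : PowerSeries K)
      = (PowerSeries.C a * X + PowerSeries.C b) ^ n := by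
    rw [hPN]; push_cast; ring
  have hcoePD : ((PD : Polynomial K) : PowerSeries K)
      = (1 - PowerSeries.C w * X) ^ n := by
    rw [hPD, ← Polynomial.coeToPowerSeries.ringHom_apply, map_pow, map_sub, map_one, map_mul]
    simp
  have hdvd2 : (X : PowerSeries K) ^ (M + 1) ∣ ((PN - Q * PD : Polynomial K) : PowerSeries K) := by
    have hcoe : ((PN - Q * PD : Polynomial K) : PowerSeries K)
        = (PN : PowerSeries K) - (Q : PowerSeries K) * (PD : PowerSeries K) := by
      rw [← Polynomial.coeToPowerSeries.ringHom_apply, map_sub, map_mul]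
      simp only [Polynomial.coeToPowerSeries.ringHom_apply]
    rw [hcoe, hcoePN, hcoePD, ← hΦn]
    have hring : Φ ^ n * (1 - PowerSeries.C w * X) ^ n
          - (Q : PowerSeries K) * (1 - PowerSeries.C w * X) ^ n
        = (Φ ^ n - (Q : PowerSeries K)) * (1 - PowerSeries.C w * X) ^ n := by ring
    rw [hring]
    exact Dvd.dvd.mul_right hdvd1 _
  have hdvd3 : (Polynomial.X : Polynomial K) ^ (M + 1) ∣ (PN - Q * PD) := by
    rw [Polynomial.X_pow_dvd_iff]
    intro d hd
    rw [← Polynomial.coeff_coe]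
    exact (PowerSeries.X_pow_dvd_iff.mp hdvd2) d hd
  obtain ⟨h₀, hh₀⟩ := hdvd3
  have haN : Polynomial.aeval y PN = (PowerSeries.C a * y + PowerSeries.C b) ^ n := by
    rw [hPN]
    simp [PowerSeries.algebraMap_apply]
  have haD : Polynomial.aeval y PD = (1 - PowerSeries.C w * y) ^ n := by
    rw [hPD]
    simp [PowerSeries.algebraMap_apply]
  have heval : (PowerSeries.C a * y + PowerSeries.C b) ^ n
      - (Polynomial.aeval y Q) * (1 - PowerSeries.C w * y) ^ n
      = y ^ (M + 1) * Polynomial.aeval y h₀ := by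
    have h := congrArg (Polynomial.aeval y) hh₀
    simp only [hPN, hPD, map_sub, map_mul, map_pow, map_add, map_one, Polynomial.aeval_X,
      Polynomial.aeval_C, PowerSeries.algebraMap_apply, Algebra.algebraMap_self,
      RingHom.id_apply] at h
    exact h
  -- replace (C a y + C b)^n by u^n * D^n
  set D : PowerSeries K := 1 - PowerSeries.C w * y with hD
  have hpow : (PowerSeries.C a * y + PowerSeries.C b) ^ n = u ^ n * D ^ n := by
    rw [← hu, mul_pow]
  have hD0 : PowerSeries.constantCoeff (D ^ n) ≠ 0 := by
    have hy0 : PowerSeries.constantCoeff y = 0 := by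
      rw [hyu, map_mul, constantCoeff_X, zero_mul]
    rw [map_pow, hD, map_sub, map_mul, hy0, mul_zero, map_one, sub_zero, one_pow]
    exact one_ne_zero
  have hDinv : D ^ n * (D ^ n)⁻¹ = 1 := PowerSeries.mul_inv_cancel _ hD0
  have hkey : (u ^ n - Polynomial.aeval y Q) * D ^ n = y ^ (M + 1) * Polynomial.aeval y h₀ := by
    rw [hpow] at heval
    linear_combination heval
  have hmain : u ^ n = Polynomial.aeval y Q
      + y ^ (M + 1) * (Polynomial.aeval y h₀ * (D ^ n)⁻¹) := by
    have h2 : u ^ n - Polynomial.aeval y Q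
        = ((u ^ n - Polynomial.aeval y Q) * D ^ n) * (D ^ n)⁻¹ := by
      rw [mul_assoc, hDinv, mul_one]
    rw [hkey] at h2
    linear_combination h2
  refine ⟨Polynomial.aeval y h₀ * (D ^ n)⁻¹, ?_⟩
  rw [hmain]
  congr 1
  have hQdeg : Q.natDegree < M + 1 := natDegree_trunc_lt (Φ ^ n) M
  rw [Polynomial.aeval_eq_sum_range' hQdeg]
  refine Finset.sum_congr rfl ?_
  intro j hj
  rw [mem_range] at hj
  rw [hQ, coeff_trunc, if_pos hj, smul_eq_C_mul]

lemma one_sub_X_inv : ((1 : PowerSeries K) - X)⁻¹ = PowerSeries.mk (fun _ => 1) := by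
  have h0 : PowerSeries.constantCoeff (1 - X : PowerSeries K) ≠ 0 := by simp
  symm
  rw [PowerSeries.eq_inv_iff_mul_eq_one h0]
  ext d
  rw [mul_sub, mul_one, map_sub]
  cases d with
  | zero =>
    have h1 : coeff 0 (PowerSeries.mk (fun _ => (1 : K)) * X) = 0 := by
      rw [coeff_zero_eq_constantCoeff, map_mul, constantCoeff_X, mul_zero]
    simp [h1]
  | succ d =>
    rw [coeff_succ_mul_X, coeff_mk, coeff_mk, coeff_one, if_neg (Nat.succ_ne_zero d), sub_self]

lemma coeff_G2 (j : ℕ) : coeff j ((((1 : PowerSeries K) - X)⁻¹) ^ 2) = (j : K) + 1 := by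
  rw [one_sub_X_inv, sq, coeff_mul]
  simp [coeff_mk, Finset.Nat.card_antidiagonal]

end Stmt10Aux

open PowerSeries Finset Stmt10Aux in
theorem stmt10 {K : Type*} [Field K] [CharZero K] (α β w : K) (hβ : β ≠ 0)
    (y : PowerSeries K) (hy0 : PowerSeries.coeff 0 y = 0)
    (hy : y * (1 - PowerSeries.C w * y) =
      PowerSeries.X * (PowerSeries.C ((α - β) * w) * y + PowerSeries.C β)) :
    ∀ n : ℕ, 1 ≤ n →
      PowerSeries.coeff n (1 - y)⁻¹ =
        (n : K)⁻¹ * PowerSeries.coeff (n - 1)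
          (((PowerSeries.C ((α - β) * w) * PowerSeries.X + PowerSeries.C β) *
              (1 - PowerSeries.C w * PowerSeries.X)⁻¹) ^ n *
            ((1 - PowerSeries.X)⁻¹) ^ 2) := by
  intro n hn
  obtain ⟨m, rfl⟩ : ∃ m, n = m + 1 := ⟨n - 1, by omega⟩
  have hy0' : PowerSeries.constantCoeff y = 0 := by
    rw [← coeff_zero_eq_constantCoeff_apply]; exact hy0
  have hD0 : PowerSeries.constantCoeff (1 - PowerSeries.C w * y) ≠ 0 := by
    rw [map_sub, map_mul, hy0', mul_zero, map_one, sub_zero]; exact one_ne_zero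
  set u : PowerSeries K := (PowerSeries.C ((α - β) * w) * y + PowerSeries.C β) *
    (1 - PowerSeries.C w * y)⁻¹ with hu_def
  have hu : u * (1 - PowerSeries.C w * y)
      = PowerSeries.C ((α - β) * w) * y + PowerSeries.C β := by
    rw [hu_def, mul_assoc, PowerSeries.inv_mul_cancel _ hD0, mul_one]
  have hyu : y = X * u := by
    calc y = y * ((1 - PowerSeries.C w * y) * (1 - PowerSeries.C w * y)⁻¹) := by
          rw [PowerSeries.mul_inv_cancel _ hD0, mul_one]
      _ = (y * (1 - PowerSeries.C w * y)) * (1 - PowerSeries.C w * y)⁻¹ := by ring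
      _ = X * u := by rw [hy, hu_def]; ring
  have hu0 : PowerSeries.constantCoeff u ≠ 0 := by
    rw [hu_def, map_mul, map_add, map_mul, hy0', mul_zero, zero_add, constantCoeff_C,
      PowerSeries.constantCoeff_inv, map_sub, map_mul, hy0', mul_zero, map_one, sub_zero,
      inv_one, mul_one]
    exact hβ
  set Φ : PowerSeries K := (PowerSeries.C ((α - β) * w) * X + PowerSeries.C β) *
    (1 - PowerSeries.C w * X)⁻¹ with hΦ
  set q : ℕ → K := fun i => coeff i (Φ ^ (m + 1)) with hq
  -- coefficientwise Lagrange for powers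
  have hcoeffk : ∀ k, 1 ≤ k → k ≤ m + 1 →
      ((m + 1 : ℕ) : K) * coeff (m + 1) (y ^ k) = (k : K) * q (m + 1 - k) := by
    intro k hk1 hk2
    obtain ⟨km, rfl⟩ : ∃ km, k = km + 1 := ⟨k - 1, by omega⟩
    have hkm : km ≤ m := by omega
    obtain ⟨S, hS⟩ := subst_trunc ((α - β) * w) β w y u hyu hu (m + 1) (m - km)
    have hmM : km + (m - km) + 1 = m + 1 := by omega
    have hL := lagrange_pow u hu0 q km (m - km) S (by rw [hmM, ← hyu]; exact hS)
    rw [hmM, ← hyu] at hL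
    have hidx : m + 1 - (km + 1) = m - km := by omega
    rw [hidx]
    exact_mod_cast hL
  -- geometric series decomposition
  have hg0 : PowerSeries.constantCoeff (1 - y) ≠ 0 := by
    rw [map_sub, hy0', map_one, sub_zero]; exact one_ne_zero
  have hinv : (1 - y) * (1 - y)⁻¹ = 1 := PowerSeries.mul_inv_cancel _ hg0
  have hinv' : (1 - y)⁻¹ * (1 - y) = 1 := PowerSeries.inv_mul_cancel _ hg0
  have hgeom : (1 - y) * (∑ k ∈ range (m + 2), y ^ k) = 1 - y ^ (m + 2) := by
    have h := geom_sum_mul y (m + 2)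
    linear_combination -h
  have hsum : (1 - y)⁻¹ = (∑ k ∈ range (m + 2), y ^ k) + y ^ (m + 2) * (1 - y)⁻¹ := by
    symm
    rw [PowerSeries.eq_inv_iff_mul_eq_one hg0]
    calc ((∑ k ∈ range (m + 2), y ^ k) + y ^ (m + 2) * (1 - y)⁻¹) * (1 - y)
        = (1 - y) * (∑ k ∈ range (m + 2), y ^ k) + y ^ (m + 2) * ((1 - y)⁻¹ * (1 - y)) := by ring
      _ = (1 - y ^ (m + 2)) + y ^ (m + 2) * 1 := by rw [hgeom, hinv']
      _ = 1 := by ring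
  have hXdvd : (X : PowerSeries K) ∣ y := X_dvd_iff.mpr hy0'
  have htail : coeff (m + 1) (y ^ (m + 2) * (1 - y)⁻¹) = 0 := by
    have hdvd : (X : PowerSeries K) ^ (m + 2) ∣ y ^ (m + 2) * (1 - y)⁻¹ :=
      Dvd.dvd.mul_right (pow_dvd_pow_of_dvd hXdvd (m + 2)) _
    exact (PowerSeries.X_pow_dvd_iff.mp hdvd) (m + 1) (by omega)
  have hm1 : ((m + 1 : ℕ) : K) ≠ 0 := Nat.cast_ne_zero.mpr (by omega)
  have hterm : ∀ k ∈ range (m + 2),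
      coeff (m + 1) (y ^ k) = ((m + 1 : ℕ) : K)⁻¹ * ((k : K) * q (m + 1 - k)) := by
    intro k hk
    rcases Nat.eq_zero_or_pos k with hk0 | hk1
    · subst hk0
      simp [coeff_one]
    · rw [mem_range] at hk
      rw [eq_inv_mul_iff_mul_eq₀ hm1]
      exact hcoeffk k hk1 (by omega)
  -- LHS computation
  have hLHS : coeff (m + 1) (1 - y)⁻¹
      = ((m + 1 : ℕ) : K)⁻¹ * ∑ k ∈ range (m + 2), (k : K) * q (m + 1 - k) := by
    rw [hsum, map_add, htail, add_zero, map_sum, Finset.sum_congr rfl hterm, ← Finset.mul_sum]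
  -- reflect the sum
  have hreflect : ∑ k ∈ range (m + 2), (k : K) * q (m + 1 - k)
      = ∑ i ∈ range (m + 1), ((m + 1 - i : ℕ) : K) * q i := by
    rw [← Finset.sum_range_reflect (fun k => (k : K) * q (m + 1 - k)) (m + 2)]
    rw [Finset.sum_range_succ]
    have hlast : ((m + 2 - 1 - (m + 1) : ℕ) : K) * q (m + 1 - (m + 2 - 1 - (m + 1))) = 0 := by
      norm_num
    rw [hlast, add_zero]
    refine Finset.sum_congr rfl ?_
    intro i hi
    rw [mem_range] at hi
    congr 2 <;> omega
  -- RHS computation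
  have hRHS : coeff (m + 1 - 1) (Φ ^ (m + 1) * (((1 : PowerSeries K) - X)⁻¹) ^ 2)
      = ∑ i ∈ range (m + 1), ((m + 1 - i : ℕ) : K) * q i := by
    have hred : m + 1 - 1 = m := rfl
    rw [hred, coeff_mul, Finset.Nat.sum_antidiagonal_eq_sum_range_succ_mk]
    refine Finset.sum_congr rfl ?_
    intro i hi
    rw [mem_range] at hi
    rw [coeff_G2]
    have hle : i ≤ m := by omega
    have hcast : ((m - i : ℕ) : K) + 1 = ((m + 1 - i : ℕ) : K) := by
      rw [Nat.cast_sub hle, Nat.cast_sub (by omega)]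
      push_cast
      ring
    rw [hcast, mul_comm]
  rw [hLHS, hreflect, ← hRHS]
end

section
/- Kernel method identity: Σ_{n≥1} (x̄−β)^n t^n g_{n−1}(α) = (x̄−α)/((β−α)α), where x̄ = α/(1 + t(α−β)²), as an identity of formal power series in t. -/
open PowerSeries Finset


lemma chooseK {K : Type*} [Field K] [CharZero K] (n k : ℕ) :
    ((n.choose (k+1) : K)) * ((k:K)+1) = (n.choose k : K) * ((n:K) - (k:K)) := by
  rcases le_or_gt k n with h | h
  · have h2 := congrArg (Nat.cast : ℕ → K) (Nat.choose_succ_right_eq n k)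
    push_cast [Nat.cast_sub h] at h2
    linear_combination h2
  · rw [Nat.choose_eq_zero_of_lt h, Nat.choose_eq_zero_of_lt (by omega)]
    simp

set_option maxHeartbeats 1000000 in
lemma perj_s14 {K : Type*} [Field K] [CharZero K] (n j : ℕ) :
    ((n:K)+3)*((n:K)+1) * (((n+2).choose (j+2) : K) * ((n+2).choose (j+3) : K))
      + ((n:K)+1)*((n:K)+2) * ((n.choose j : K)*(n.choose (j+1):K)
        - 2*((n.choose (j+1):K)*(n.choose (j+2):K))
        + (n.choose (j+2):K)*(n.choose (j+3):K))
    = (2*(n:K)+3)*((n:K)+2) * (((n+1).choose (j+1):K)*((n+1).choose (j+2):K)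
      + ((n+1).choose (j+2):K)*((n+1).choose (j+3):K)) := by
  set x0 : K := (n.choose j : K) with hx0d
  set x1 : K := (n.choose (j+1) : K) with hx1d
  set x2 : K := (n.choose (j+2) : K) with hx2d
  set x3 : K := (n.choose (j+3) : K) with hx3d
  have h1 : x1 * ((j:K)+1) = x0 * ((n:K) - (j:K)) := chooseK n j
  have h2 : x2 * ((j:K)+2) = x1 * ((n:K) - (j:K) - 1) := by
    have t := chooseK (K := K) n (j+1); push_cast at t; linear_combination t
  have h3 : x3 * ((j:K)+3) = x2 * ((n:K) - (j:K) - 2) := by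
    have t := chooseK (K := K) n (j+2); push_cast at t; linear_combination t
  have p1 : ((n+1).choose (j+1) : K) = x0 + x1 := by
    rw [Nat.choose_succ_succ]; push_cast; ring
  have p2 : ((n+1).choose (j+2) : K) = x1 + x2 := by
    rw [Nat.choose_succ_succ]; push_cast [hx1d, hx2d]; ring
  have p3 : ((n+1).choose (j+3) : K) = x2 + x3 := by
    rw [Nat.choose_succ_succ]; push_cast [hx2d, hx3d]; ring
  have q2 : ((n+2).choose (j+2) : K) = x0 + 2*x1 + x2 := by
    rw [show n+2 = (n+1)+1 from rfl, Nat.choose_succ_succ]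
    push_cast [p1, p2]; ring
  have q3 : ((n+2).choose (j+3) : K) = x1 + 2*x2 + x3 := by
    rw [show n+2 = (n+1)+1 from rfl, Nat.choose_succ_succ]
    push_cast [p2, p3]; ring
  rw [p1, p2, p3, q2, q3]
  have hfac : (((j:K)+1)^2*((j:K)+2)^2*((j:K)+3)) ≠ 0 := by
    have a1 : ((j:K)+1) ≠ 0 := by exact_mod_cast (Nat.cast_ne_zero (R := K)).mpr (by omega : j+1 ≠ 0)
    have a2 : ((j:K)+2) ≠ 0 := by exact_mod_cast (Nat.cast_ne_zero (R := K)).mpr (by omega : j+2 ≠ 0)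
    have a3 : ((j:K)+3) ≠ 0 := by exact_mod_cast (Nat.cast_ne_zero (R := K)).mpr (by omega : j+3 ≠ 0)
    exact mul_ne_zero (mul_ne_zero (pow_ne_zero 2 a1) (pow_ne_zero 2 a2)) a3
  apply mul_left_cancel₀ hfac
  linear_combination
    ((8)*x1 + (24)*(j:K)*x1 + (26)*(j:K)^2*x1 + (12)*(j:K)^3*x1 + (2)*(j:K)^4*x1 + (8)*(n:K)*x1 + (26)*(n:K)*(j:K)*x1 + (31)*(n:K)*(j:K)^2*x1 + (16)*(n:K)*(j:K)^3*x1 + (3)*(n:K)*(j:K)^4*x1 + (-2)*(n:K)^2*x1 + (-3)*(n:K)^2*(j:K)*x1 + (n:K)^2*(j:K)^2*x1 + (3)*(n:K)^2*(j:K)^3*x1 + (n:K)^2*(j:K)^4*x1 + (-2)*(n:K)^3*x1 + (-5)*(n:K)^3*(j:K)*x1 + (-4)*(n:K)^3*(j:K)^2*x1 + (-1)*(n:K)^3*(j:K)^3*x1) * h1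
    + ((4)*x2 + (-8)*x1 + (-12)*x0 + (12)*(j:K)*x2 + (-24)*(j:K)*x1 + (-36)*(j:K)*x0 + (13)*(j:K)^2*x2 + (-26)*(j:K)^2*x1 + (-39)*(j:K)^2*x0 + (6)*(j:K)^3*x2 + (-12)*(j:K)^3*x1 + (-18)*(j:K)^3*x0 + (j:K)^4*x2 + (-2)*(j:K)^4*x1 + (-3)*(j:K)^4*x0 + (4)*(n:K)*x2 + (-4)*(n:K)*x1 + (-4)*(n:K)*x0 + (12)*(n:K)*(j:K)*x2 + (-14)*(n:K)*(j:K)*x1 + (-16)*(n:K)*(j:K)*x0 + (13)*(n:K)*(j:K)^2*x2 + (-18)*(n:K)*(j:K)^2*x1 + (-23)*(n:K)*(j:K)^2*x0 + (6)*(n:K)*(j:K)^3*x2 + (-10)*(n:K)*(j:K)^3*x1 + (-14)*(n:K)*(j:K)^3*x0 + (n:K)*(j:K)^4*x2 + (-2)*(n:K)*(j:K)^4*x1 + (-3)*(n:K)*(j:K)^4*x0 + (-2)*(n:K)^2*x1 + (4)*(n:K)^2*x0 + (-7)*(n:K)^2*(j:K)*x1 + (8)*(n:K)^2*(j:K)*x0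 + (-9)*(n:K)^2*(j:K)^2*x1 + (3)*(n:K)^2*(j:K)^2*x0 + (-5)*(n:K)^2*(j:K)^3*x1 + (-2)*(n:K)^2*(j:K)^3*x0 + (-1)*(n:K)^2*(j:K)^4*x1 + (-1)*(n:K)^2*(j:K)^4*x0 + (2)*(n:K)^3*x0 + (5)*(n:K)^3*(j:K)*x0 + (4)*(n:K)^3*(j:K)^2*x0 + (n:K)^3*(j:K)^3*x0) * h2
    + ((-4)*x2 + (12)*x0 + (-12)*(j:K)*x2 + (36)*(j:K)*x0 + (-13)*(j:K)^2*x2 + (39)*(j:K)^2*x0 + (-6)*(j:K)^3*x2 + (18)*(j:K)^3*x0 + (-1)*(j:K)^4*x2 + (3)*(j:K)^4*x0 + (4)*(n:K)*x1 + (16)*(n:K)*x0 + (12)*(n:K)*(j:K)*x1 + (48)*(n:K)*(j:K)*x0 + (13)*(n:K)*(j:K)^2*x1 + (52)*(n:K)*(j:K)^2*x0 + (6)*(n:K)*(j:K)^3*x1 + (24)*(n:K)*(j:K)^3*x0 + (n:K)*(j:K)^4*x1 + (4)*(n:K)*(j:K)^4*x0 + (4)*(n:K)^2*x0 + (12)*(n:K)^2*(j:K)*x0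 + (13)*(n:K)^2*(j:K)^2*x0 + (6)*(n:K)^2*(j:K)^3*x0 + (n:K)^2*(j:K)^4*x0) * h3

lemma comb5 {K : Type*} [CommRing K] (S : Finset ℕ) (A B C : K) (F G H I P Q : ℕ → K)
    (h : ∀ j ∈ S, A*(F j) + B*(G j - 2*(H j) + I j) = C*(P j + Q j)) :
    A*(∑ j ∈ S, F j) + B*((∑ j ∈ S, G j) - 2*(∑ j ∈ S, H j) + (∑ j ∈ S, I j))
      = C*((∑ j ∈ S, P j) + (∑ j ∈ S, Q j)) := by
  have h' : ∀ j ∈ S, A*(F j) + (B*(G j) - (2*B)*(H j) + B*(I j)) = C*(P j) + C*(Q j) := by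
    intro j hj; linear_combination h j hj
  have hs := Finset.sum_congr rfl h'
  simp only [Finset.sum_add_distrib, Finset.sum_sub_distrib, ← Finset.mul_sum] at hs
  linear_combination hs

lemma grec {K : Type*} [Field K] [CharZero K] (α β : K) (g : ℕ → K)
    (hg : ∀ m : ℕ, 1 ≤ m →
      g m = (m : K)⁻¹ * ∑ k ∈ Finset.range m,
        (m.choose k : K) * (m.choose (k + 1) : K) * β ^ (m - k) * α ^ k)
    (n : ℕ) (hn : 1 ≤ n) :
    ((n:K)+3) * g (n+2) + (α-β)^2 * (n:K) * g n = (α+β) * (2*(n:K)+3) * g (n+1) := by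
  have hn0 : (n:K) ≠ 0 := Nat.cast_ne_zero.mpr (by omega)
  have hn1 : ((n:K)+1) ≠ 0 := by
    exact_mod_cast (Nat.cast_ne_zero (R := K)).mpr (by omega : n+1 ≠ 0)
  have hn2 : ((n:K)+2) ≠ 0 := by
    exact_mod_cast (Nat.cast_ne_zero (R := K)).mpr (by omega : n+2 ≠ 0)
  set S2 : K := ∑ k ∈ Finset.range (n+2),
      ((n+2).choose k : K) * ((n+2).choose (k+1) : K) * β ^ (n+2-k) * α ^ k with hS2
  set S1 : K := ∑ k ∈ Finset.range (n+1),
      ((n+1).choose k : K) * ((n+1).choose (k+1) : K) * β ^ (n+1-k) * α ^ k with hS1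
  set S0 : K := ∑ k ∈ Finset.range n,
      (n.choose k : K) * (n.choose (k+1) : K) * β ^ (n-k) * α ^ k with hS0
  have hga : ((n:K)+2) * g (n+2) = S2 := by
    rw [hg (n+2) (by omega)]
    have hc : ((n+2 : ℕ) : K) = (n:K)+2 := by push_cast; ring
    rw [hc, ← mul_assoc, mul_inv_cancel₀ hn2, one_mul]
  have hgb : ((n:K)+1) * g (n+1) = S1 := by
    rw [hg (n+1) (by omega)]
    have hc : ((n+1 : ℕ) : K) = (n:K)+1 := by push_cast; ring
    rw [hc, ← mul_assoc, mul_inv_cancel₀ hn1, one_mul]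
  have hgc : (n:K) * g n = S0 := by
    rw [hg n hn, ← mul_assoc, mul_inv_cancel₀ hn0, one_mul]
  set U2 : K := ∑ j ∈ Finset.range n,
      ((n+2).choose (j+2) : K) * ((n+2).choose (j+3) : K) * (β ^ (n-j) * α ^ (j+2)) with hU2
  set V0 : K := ∑ j ∈ Finset.range n,
      (n.choose j : K) * (n.choose (j+1) : K) * (β ^ (n-j) * α ^ (j+2)) with hV0
  set V1 : K := ∑ j ∈ Finset.range n,
      (n.choose (j+1) : K) * (n.choose (j+2) : K) * (β ^ (n-j) * α ^ (j+2)) with hV1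
  set V2 : K := ∑ j ∈ Finset.range n,
      (n.choose (j+2) : K) * (n.choose (j+3) : K) * (β ^ (n-j) * α ^ (j+2)) with hV2
  set W1 : K := ∑ j ∈ Finset.range n,
      ((n+1).choose (j+1) : K) * ((n+1).choose (j+2) : K) * (β ^ (n-j) * α ^ (j+2)) with hW1
  set W2 : K := ∑ j ∈ Finset.range n,
      ((n+1).choose (j+2) : K) * ((n+1).choose (j+3) : K) * (β ^ (n-j) * α ^ (j+2)) with hW2
  have eA : α^2 * S0 = V0 := by
    rw [hS0, hV0, Finset.mul_sum]
    refine Finset.sum_congr rfl fun j hj => by ring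
  have eB : α*β * S0 = V1 + (n.choose 0 : K) * (n.choose 1 : K) * (β^(n+1) * α) := by
    rw [hS0, hV1, Finset.mul_sum]
    have step1 : ∑ k ∈ Finset.range n, α*β*((n.choose k : K) * (n.choose (k+1) : K) * β ^ (n-k) * α ^ k)
        = ∑ k ∈ Finset.range n, (n.choose k : K) * (n.choose (k+1) : K) * (β ^ (n+1-k) * α ^ (k+1)) := by
      refine Finset.sum_congr rfl fun k hk => ?_
      simp only [Finset.mem_range] at hk
      rw [show n+1-k = (n-k)+1 by omega]; ring
    rw [step1]
    have pad : ∑ k ∈ Finset.range n, (n.choose k : K) * (n.choose (k+1) : K) * (β ^ (n+1-k) * α ^ (k+1))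
        = ∑ k ∈ Finset.range (n+1), (n.choose k : K) * (n.choose (k+1) : K) * (β ^ (n+1-k) * α ^ (k+1)) := by
      rw [Finset.sum_range_succ]
      have hz : (n.choose (n+1) : K) = 0 := by rw [Nat.choose_eq_zero_of_lt (by omega)]; simp
      rw [hz]; ring
    rw [pad, Finset.sum_range_succ']
    have fix : ∑ j ∈ Finset.range n, (n.choose (j+1) : K) * (n.choose (j+1+1) : K) * (β ^ (n+1-(j+1)) * α ^ (j+1+1))
        = V1 := by
      rw [hV1]
      refine Finset.sum_congr rfl fun j hj => ?_
      rw [show n+1-(j+1) = n-j by omega]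
    rw [fix]
    norm_num
    exact hV1
  have eC : β^2 * S0 = V2 + ((n.choose 1 : K) * (n.choose 2 : K) * (β^(n+1) * α)
      + (n.choose 0 : K) * (n.choose 1 : K) * β^(n+2)) := by
    rw [hS0, hV2, Finset.mul_sum]
    have step1 : ∑ k ∈ Finset.range n, β^2*((n.choose k : K) * (n.choose (k+1) : K) * β ^ (n-k) * α ^ k)
        = ∑ k ∈ Finset.range n, (n.choose k : K) * (n.choose (k+1) : K) * (β ^ (n+2-k) * α ^ k) := by
      refine Finset.sum_congr rfl fun k hk => ?_
      simp only [Finset.mem_range] at hk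
      rw [show n+2-k = (n-k)+2 by omega]; ring
    rw [step1]
    have pad : ∑ k ∈ Finset.range n, (n.choose k : K) * (n.choose (k+1) : K) * (β ^ (n+2-k) * α ^ k)
        = ∑ k ∈ Finset.range (n+2), (n.choose k : K) * (n.choose (k+1) : K) * (β ^ (n+2-k) * α ^ k) := by
      rw [Finset.sum_range_succ, Finset.sum_range_succ]
      have hz : (n.choose (n+1) : K) = 0 := by rw [Nat.choose_eq_zero_of_lt (by omega)]; simp
      have hz2 : (n.choose (n+1+1) : K) = 0 := by rw [Nat.choose_eq_zero_of_lt (by omega)]; simp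
      rw [hz, hz2]; ring
    rw [pad, Finset.sum_range_succ', Finset.sum_range_succ']
    have fix : ∑ j ∈ Finset.range n, (n.choose (j+1+1) : K) * (n.choose (j+1+1+1) : K) * (β ^ (n+2-(j+1+1)) * α ^ (j+1+1))
        = V2 := by
      rw [hV2]
      refine Finset.sum_congr rfl fun j hj => ?_
      rw [show n+2-(j+1+1) = n-j by omega]
    rw [fix]
    norm_num
    ring
  have eD : α * S1 = W1 + ((n+1).choose 0 : K) * ((n+1).choose 1 : K) * (β^(n+1) * α) := by
    rw [hS1, hW1, Finset.mul_sum]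
    have step1 : ∑ k ∈ Finset.range (n+1), α*(((n+1).choose k : K) * ((n+1).choose (k+1) : K) * β ^ (n+1-k) * α ^ k)
        = ∑ k ∈ Finset.range (n+1), ((n+1).choose k : K) * ((n+1).choose (k+1) : K) * (β ^ (n+1-k) * α ^ (k+1)) := by
      refine Finset.sum_congr rfl fun k hk => by ring
    rw [step1, Finset.sum_range_succ']
    have fix : ∑ j ∈ Finset.range n, ((n+1).choose (j+1) : K) * ((n+1).choose (j+1+1) : K) * (β ^ (n+1-(j+1)) * α ^ (j+1+1))
        = W1 := by
      rw [hW1]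
      refine Finset.sum_congr rfl fun j hj => ?_
      rw [show n+1-(j+1) = n-j by omega]
    rw [fix]
    norm_num
    exact hW1
  have eE : β * S1 = W2 + (((n+1).choose 1 : K) * ((n+1).choose 2 : K) * (β^(n+1) * α)
      + ((n+1).choose 0 : K) * ((n+1).choose 1 : K) * β^(n+2)) := by
    rw [hS1, hW2, Finset.mul_sum]
    have step1 : ∑ k ∈ Finset.range (n+1), β*(((n+1).choose k : K) * ((n+1).choose (k+1) : K) * β ^ (n+1-k) * α ^ k)
        = ∑ k ∈ Finset.range (n+1), ((n+1).choose k : K) * ((n+1).choose (k+1) : K) * (β ^ (n+2-k) * α ^ k) := by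
      refine Finset.sum_congr rfl fun k hk => ?_
      simp only [Finset.mem_range] at hk
      rw [show n+2-k = (n+1-k)+1 by omega]; ring
    rw [step1]
    have pad : ∑ k ∈ Finset.range (n+2), ((n+1).choose k : K) * ((n+1).choose (k+1) : K) * (β ^ (n+2-k) * α ^ k)
        = ∑ k ∈ Finset.range (n+1), ((n+1).choose k : K) * ((n+1).choose (k+1) : K) * (β ^ (n+2-k) * α ^ k) := by
      rw [Finset.sum_range_succ]
      have hz : ((n+1).choose (n+1+1) : K) = 0 := by rw [Nat.choose_eq_zero_of_lt (by omega)]; simp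
      rw [hz]; ring
    rw [← pad, Finset.sum_range_succ', Finset.sum_range_succ']
    have fix : ∑ j ∈ Finset.range n, ((n+1).choose (j+1+1) : K) * ((n+1).choose (j+1+1+1) : K) * (β ^ (n+2-(j+1+1)) * α ^ (j+1+1))
        = W2 := by
      rw [hW2]
      refine Finset.sum_congr rfl fun j hj => ?_
      rw [show n+2-(j+1+1) = n-j by omega]
    rw [fix]
    norm_num
    ring
  have eF : S2 = U2 + (((n+2).choose 1 : K) * ((n+2).choose 2 : K) * (β^(n+1) * α)
      + ((n+2).choose 0 : K) * ((n+2).choose 1 : K) * β^(n+2)) := by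
    rw [hS2, hU2]
    have step1 : ∑ k ∈ Finset.range (n+2), ((n+2).choose k : K) * ((n+2).choose (k+1) : K) * β ^ (n+2-k) * α ^ k
        = ∑ k ∈ Finset.range (n+2), ((n+2).choose k : K) * ((n+2).choose (k+1) : K) * (β ^ (n+2-k) * α ^ k) := by
      refine Finset.sum_congr rfl fun k hk => by ring
    rw [step1, Finset.sum_range_succ', Finset.sum_range_succ']
    have fix : ∑ j ∈ Finset.range n, ((n+2).choose (j+1+1) : K) * ((n+2).choose (j+1+1+1) : K) * (β ^ (n+2-(j+1+1)) * α ^ (j+1+1))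
        = U2 := by
      refine Finset.sum_congr rfl fun j hj => ?_
      rw [show n+2-(j+1+1) = n-j by omega]
    rw [fix]
    norm_num
    ring
  have combined : ((n:K)+3)*((n:K)+1)*U2 + ((n:K)+1)*((n:K)+2)*(V0 - 2*V1 + V2)
      = (2*(n:K)+3)*((n:K)+2)*(W1 + W2) := by
    rw [hU2, hV0, hV1, hV2, hW1, hW2]
    refine comb5 (Finset.range n) _ _ _ _ _ _ _ _ _ fun j hj => ?_
    linear_combination (β ^ (n-j) * α ^ (j+2)) * perj_s14 (K := K) n j
  have b11 : ((n:ℕ).choose 1 : K) = (n:K) := by simp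
  have b12 : (n.choose 2 : K) * 2 = (n:K) * ((n:K) - 1) := by
    have t := chooseK (K := K) n 1
    rw [b11] at t; linear_combination t
  have b21 : ((n+1).choose 1 : K) = (n:K)+1 := by simp
  have b22 : ((n+1).choose 2 : K) * 2 = ((n:K)+1) * (n:K) := by
    have t := chooseK (K := K) (n+1) 1
    rw [b21] at t; push_cast at t; linear_combination t
  have b31 : ((n+2).choose 1 : K) = (n:K)+2 := by simp
  have b32 : ((n+2).choose 2 : K) * 2 = ((n:K)+2) * ((n:K)+1) := by
    have t := chooseK (K := K) (n+2) 1
    rw [b31] at t; push_cast at t; linear_combination t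
  have hMAIN : ((n:K)+3)*((n:K)+1)*S2 + ((n:K)+1)*((n:K)+2)*((α-β)^2*S0)
      = (α+β)*(2*(n:K)+3)*((n:K)+2)*S1 := by
    have expand0 : (α-β)^2*S0 = α^2*S0 - 2*(α*β*S0) + β^2*S0 := by ring
    have expand1 : (α+β)*(2*(n:K)+3)*((n:K)+2)*S1
        = (2*(n:K)+3)*((n:K)+2)*(α*S1) + (2*(n:K)+3)*((n:K)+2)*(β*S1) := by ring
    rw [expand0, expand1, eA, eB, eC, eD, eE, eF]
    simp only [Nat.choose_zero_right, Nat.cast_one, b11, b21, b31]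
    linear_combination combined
      + (((n:K)+3)*((n:K)+1)*((n:K)+2)/2*(β^(n+1)*α)) * b32
      + ((n:K)*((n:K)+1)*((n:K)+2)/2*(β^(n+1)*α)) * b12
      - ((2*(n:K)+3)*((n:K)+2)*((n:K)+1)/2*(β^(n+1)*α)) * b22
  have hprod : (n:K)*((n:K)+1)*((n:K)+2) ≠ 0 := mul_ne_zero (mul_ne_zero hn0 hn1) hn2
  apply mul_left_cancel₀ hprod
  linear_combination (n:K)*hMAIN + ((n:K)+3)*((n:K)+1)*(n:K)*hga
    + (α-β)^2*(n:K)*((n:K)+1)*((n:K)+2)*hgc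
    - (α+β)*(2*(n:K)+3)*((n:K)+2)*(n:K)*hgb


section
variable {K : Type*} [Field K] [CharZero K] (α β : K) (g : ℕ → K)

lemma g1val (hg : ∀ m : ℕ, 1 ≤ m →
      g m = (m : K)⁻¹ * ∑ k ∈ Finset.range m,
        (m.choose k : K) * (m.choose (k + 1) : K) * β ^ (m - k) * α ^ k) :
    g 1 = β := by
  rw [hg 1 (by norm_num)]
  norm_num

lemma g2val (hg : ∀ m : ℕ, 1 ≤ m →
      g m = (m : K)⁻¹ * ∑ k ∈ Finset.range m,
        (m.choose k : K) * (m.choose (k + 1) : K) * β ^ (m - k) * α ^ k) :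
    g 2 = β^2 + α*β := by
  rw [hg 2 (by norm_num)]
  rw [Finset.sum_range_succ, Finset.sum_range_one]
  norm_num
  have h2 : (2:K) ≠ 0 := two_ne_zero
  field_simp


lemma grecAll (hg0 : g 0 = 1)
    (hg : ∀ m : ℕ, 1 ≤ m →
      g m = (m : K)⁻¹ * ∑ k ∈ Finset.range m,
        (m.choose k : K) * (m.choose (k + 1) : K) * β ^ (m - k) * α ^ k)
    (n : ℕ) :
    ((n:K)+3) * g (n+2) + (α-β)^2 * (n:K) * g n = (α+β) * (2*(n:K)+3) * g (n+1) := by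
  rcases Nat.eq_zero_or_pos n with rfl | hn
  · rw [g2val α β g hg, g1val α β g hg]
    push_cast
    ring
  · exact grec α β g hg n hn

lemma keylem (hg0 : g 0 = 1)
    (hg : ∀ m : ℕ, 1 ≤ m →
      g m = (m : K)⁻¹ * ∑ k ∈ Finset.range m,
        (m.choose k : K) * (m.choose (k + 1) : K) * β ^ (m - k) * α ^ k)
    (Y : PowerSeries K) : ∀ n : ℕ,
    (1 - PowerSeries.C (R := K) (2*(α+β)) * Y + PowerSeries.C (R := K) ((α-β)^2) * Y^2) *
        (∑ m ∈ Finset.range (n+2), PowerSeries.C (R := K) (((m:K)+1) * g m) * Y^m)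
      + (PowerSeries.C (R := K) (α+β) * Y - PowerSeries.C (R := K) ((α-β)^2) * Y^2) *
        (∑ m ∈ Finset.range (n+2), PowerSeries.C (R := K) (g m) * Y^m)
    = 1 - PowerSeries.C (R := K) (α-β) * Y
      + PowerSeries.C (R := K) ((α-β)^2*(n:K)*(g n) - (α+β)*(2*(n:K)+3)*(g (n+1))) * Y^(n+2)
      + PowerSeries.C (R := K) ((α-β)^2*((n:K)+1)*(g (n+1))) * Y^(n+3) := by
  intro n
  induction n with
  | zero =>
    simp only [Finset.sum_range_succ, Finset.sum_range_one]
    rw [hg0, g1val α β g hg]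
    push_cast
    simp only [map_mul, map_add, map_sub, map_pow, map_one, map_zero, map_ofNat, map_natCast,
      Nat.cast_zero, Nat.cast_one]
    ring
  | succ n ih =>
    rw [Finset.sum_range_succ (fun m => PowerSeries.C (R := K) (((m:K)+1) * g m) * Y^m) (n+2),
        Finset.sum_range_succ (fun m => PowerSeries.C (R := K) (g m) * Y^m) (n+2)]
    have hr := congrArg (PowerSeries.C (R := K)) (grecAll α β g hg0 hg n)
    simp only [map_mul, map_add, map_sub, map_pow, map_one, map_zero, map_ofNat, map_natCast] at hr
    push_cast at ih ⊢
    simp only [map_mul, map_add, map_sub, map_pow, map_one, map_zero, map_ofNat, map_natCast] at ih ⊢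
    linear_combination ih + Y^(n+2) * hr
end

lemma pow_deriv {K : Type*} [Field K] (f : PowerSeries K) :
    ∀ m : ℕ, f * (d⁄dX K) (f^m) = PowerSeries.C (R := K) ((m:K)) * f^m * (d⁄dX K) f
  | 0 => by simp
  | (m+1) => by
    rw [pow_succ, Derivation.leibniz]
    simp only [smul_eq_mul]
    push_cast
    simp only [map_add, map_one]
    linear_combination f * pow_deriv f m

lemma coeff_loc {K : Type*} [Field K] (A B f h : PowerSeries K) (m : ℕ)
    (hc : ∀ k, k ≤ m+1 → PowerSeries.coeff (R := K) k f = PowerSeries.coeff (R := K) k h) :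
    PowerSeries.coeff (R := K) m (A * (d⁄dX K) f + B * f)
      = PowerSeries.coeff (R := K) m (A * (d⁄dX K) h + B * h) := by
  simp only [map_add, PowerSeries.coeff_mul]
  congr 1
  · refine Finset.sum_congr rfl fun p hp => ?_
    rw [Finset.HasAntidiagonal.mem_antidiagonal] at hp
    rw [PowerSeries.coeff_derivative, PowerSeries.coeff_derivative, hc (p.2+1) (by omega)]
  · refine Finset.sum_congr rfl fun p hp => ?_
    rw [Finset.HasAntidiagonal.mem_antidiagonal] at hp
    rw [hc p.2 (by omega)]

lemma ode_unique {K : Type*} [Field K] [CharZero K] (A B f : PowerSeries K)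
    (hA : PowerSeries.constantCoeff (R := K) A = 1)
    (h0 : PowerSeries.constantCoeff (R := K) f = 0)
    (hode : A * (d⁄dX K) f + B * f = 0) : f = 0 := by
  have main : ∀ n, PowerSeries.coeff (R := K) n f = 0 := by
    intro n
    induction n using Nat.strong_induction_on with
    | _ n ih =>
      match n with
      | 0 => simpa using h0
      | k+1 =>
        have hk := congrArg (PowerSeries.coeff (R := K) k) hode
        rw [map_add, PowerSeries.coeff_mul, PowerSeries.coeff_mul, map_zero] at hk
        have e1 : ∑ p ∈ Finset.HasAntidiagonal.antidiagonal k,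
            PowerSeries.coeff (R := K) p.1 B * PowerSeries.coeff (R := K) p.2 f = 0 := by
          refine Finset.sum_eq_zero fun p hp => ?_
          rw [Finset.HasAntidiagonal.mem_antidiagonal] at hp
          rw [ih p.2 (by omega), mul_zero]
        have e2 : ∑ p ∈ Finset.HasAntidiagonal.antidiagonal k,
            PowerSeries.coeff (R := K) p.1 A * PowerSeries.coeff (R := K) p.2 ((d⁄dX K) f)
            = PowerSeries.coeff (R := K) 0 A * (PowerSeries.coeff (R := K) (k+1) f * (k+1)) := by
          rw [Finset.sum_eq_single (0, k)]
          · rw [PowerSeries.coeff_derivative]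
          · intro p hp hne
            rw [Finset.HasAntidiagonal.mem_antidiagonal] at hp
            have hlt : p.2 < k := by
              rcases p with ⟨p1, p2⟩
              simp only at hp ⊢
              by_contra hcon
              have h1 : p1 = 0 ∧ p2 = k := by omega
              exact hne (by rw [h1.1, h1.2])
            rw [PowerSeries.coeff_derivative, ih (p.2+1) (by omega)]
            ring
          · intro hmem
            exact absurd (Finset.HasAntidiagonal.mem_antidiagonal.mpr (by simp)) hmem
        rw [e1, e2, add_zero] at hk
        have hA0 : PowerSeries.coeff (R := K) 0 A = 1 := by
          rw [PowerSeries.coeff_zero_eq_constantCoeff]; exact hA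
        rw [hA0, one_mul] at hk
        have hcast : ((k:K)+1) ≠ 0 := by
          exact_mod_cast (Nat.cast_ne_zero (R := K)).mpr (by omega : k+1 ≠ 0)
        have := mul_eq_zero.mp hk
        rcases this with h | h
        · exact h
        · exact absurd (by push_cast at h ⊢; exact h) hcast
  exact PowerSeries.ext fun n => by rw [main n, map_zero]

set_option maxHeartbeats 1000000 in
theorem stmt14 {K : Type*} [Field K] [CharZero K] (α β : K) (hαβ : α ≠ β) (hα : α ≠ 0)
    (g : ℕ → K) (hg0 : g 0 = 1)
    (hg : ∀ m : ℕ, 1 ≤ m →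
      g m = (m : K)⁻¹ * ∑ k ∈ Finset.range m,
        (m.choose k : K) * (m.choose (k + 1) : K) * β ^ (m - k) * α ^ k) :
    ∀ m : ℕ,
      PowerSeries.coeff (R := K) m
          (∑ n ∈ Finset.Icc 1 m,
            (PowerSeries.C (R := K) α * (1 + PowerSeries.C (R := K) ((α - β) ^ 2) * PowerSeries.X)⁻¹ -
                PowerSeries.C (R := K) β) ^ n * PowerSeries.X ^ n * PowerSeries.C (R := K) (g (n - 1))) =
        PowerSeries.coeff (R := K) m
          ((PowerSeries.C (R := K) α * (1 + PowerSeries.C (R := K) ((α - β) ^ 2) * PowerSeries.X)⁻¹ -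
              PowerSeries.C (R := K) α) * PowerSeries.C (R := K) (((β - α) * α)⁻¹)) := by
  classical
  set Qi : PowerSeries K := (1 + PowerSeries.C (R := K) ((α - β) ^ 2) * PowerSeries.X)⁻¹ with hQidef
  have hQ0 : PowerSeries.constantCoeff (R := K) (1 + PowerSeries.C (R := K) ((α - β) ^ 2) * PowerSeries.X) = 1 := by
    simp
  have hQne : (1 + PowerSeries.C (R := K) ((α - β) ^ 2) * PowerSeries.X) ≠ 0 := by
    intro h; rw [h, map_zero] at hQ0; exact one_ne_zero hQ0.symm
  have hQQi : (1 + PowerSeries.C (R := K) ((α - β) ^ 2) * PowerSeries.X) * Qi = 1 :=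
    PowerSeries.mul_inv_cancel _ (by rw [hQ0]; exact one_ne_zero)
  set W : PowerSeries K := PowerSeries.C (R := K) α * Qi - PowerSeries.C (R := K) β with hWdef
  set Y : PowerSeries K := W * PowerSeries.X with hYdef
  -- derivative facts
  have hdCX : ∀ c : K, (d⁄dX K) (PowerSeries.C (R := K) c * PowerSeries.X) = PowerSeries.C (R := K) c := by
    intro c
    rw [Derivation.leibniz]
    simp
  have hdQ : (d⁄dX K) (1 + PowerSeries.C (R := K) ((α - β) ^ 2) * PowerSeries.X)
      = PowerSeries.C (R := K) ((α-β)^2) := by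
    rw [map_add, hdCX]
    simp
  have hdQi : (1 + PowerSeries.C (R := K) ((α - β) ^ 2) * PowerSeries.X) * (d⁄dX K) Qi
      = -(PowerSeries.C (R := K) ((α-β)^2) * Qi) := by
    have h := congrArg (d⁄dX K) hQQi
    rw [Derivation.leibniz, Derivation.map_one_eq_zero, hdQ] at h
    simp only [smul_eq_mul] at h
    linear_combination h
  have hdW : (d⁄dX K) W = PowerSeries.C (R := K) α * (d⁄dX K) Qi := by
    rw [hWdef, map_sub, Derivation.leibniz]
    simp only [smul_eq_mul, derivative_C, mul_zero, add_zero, sub_zero]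
  have hdY : (d⁄dX K) Y = W + PowerSeries.X * (PowerSeries.C (R := K) α * (d⁄dX K) Qi) := by
    rw [hYdef, Derivation.leibniz]
    simp only [smul_eq_mul, derivative_X, mul_one]
    rw [hdW]
  set T : PowerSeries K := PowerSeries.C (R := K) (α-β) * PowerSeries.X * Qi with hTdef
  have hdT : (d⁄dX K) T = PowerSeries.C (R := K) (α-β) * Qi
      + PowerSeries.C (R := K) (α-β) * PowerSeries.X * (d⁄dX K) Qi := by
    rw [hTdef, Derivation.leibniz, Derivation.leibniz]
    simp only [smul_eq_mul, derivative_X, derivative_C, mul_one, mul_zero, add_zero]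
    ring
  set A : PowerSeries K := 1 - PowerSeries.C (R := K) (2*(α+β)) * Y + PowerSeries.C (R := K) ((α-β)^2) * Y^2 with hAdef
  set B : PowerSeries K := (PowerSeries.C (R := K) (α+β) - PowerSeries.C (R := K) ((α-β)^2) * Y) * (d⁄dX K) Y with hBdef
  set Cs : PowerSeries K := (d⁄dX K) Y * (1 - PowerSeries.C (R := K) (α-β) * Y) with hCsdef
  -- ODE for T
  have hF3 : A * (d⁄dX K) T + B * T = Cs := by
    apply mul_left_cancel₀ hQne
    rw [hAdef, hBdef, hCsdef, hdT, hdY, hTdef, hYdef, hWdef]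
    have hdQi' := hdQi
    have hQQi' := hQQi
    simp only [map_sub, map_add, map_mul, map_pow, map_ofNat, map_one] at hdQi' hQQi' ⊢
    linear_combination
      ((-1)*PowerSeries.C (R := K) β*(X : PowerSeries K) + (-2)*PowerSeries.C (R := K) β^3*(X : PowerSeries K)^2 + (-1)*PowerSeries.C (R := K) β^5*(X : PowerSeries K)^3 + PowerSeries.C (R := K) α*PowerSeries.C (R := K) β^2*(X : PowerSeries K)^2 + PowerSeries.C (R := K) α*PowerSeries.C (R := K) β^2*(X : PowerSeries K)^2*Qi + (3)*PowerSeries.C (R := K) α*PowerSeries.C (R := K) β^4*(X : PowerSeries K)^3 + PowerSeries.C (R := K) α*PowerSeries.C (R := K) β^4*(X : PowerSeries K)^3*Qi + PowerSeries.C (R := K) α^2*PowerSeries.C (R := K) β*(X : PowerSeries K)^2 + (-1)*PowerSeries.C (R := K) α^2*PowerSeries.C (R := K) β*(X : PowerSeries K)^2*Qi + (-3)*PowerSeries.C (R := K) α^2*PowerSeries.C (R := K) β^3*(X : PowerSeries K)^3 + (-3)*PowerSeries.C (R := K) α^2*PowerSeries.C (R := K) β^3*(X : PowerSeries K)^3*Qi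 + PowerSeries.C (R := K) α^3*PowerSeries.C (R := K) β^2*(X : PowerSeries K)^3 + (3)*PowerSeries.C (R := K) α^3*PowerSeries.C (R := K) β^2*(X : PowerSeries K)^3*Qi + (-1)*PowerSeries.C (R := K) α^4*PowerSeries.C (R := K) β*(X : PowerSeries K)^3*Qi) * hdQi'
      + ((-1)*PowerSeries.C (R := K) β + PowerSeries.C (R := K) β^5*(X : PowerSeries K)^2 + PowerSeries.C (R := K) α*PowerSeries.C (R := K) β^2*(X : PowerSeries K) + PowerSeries.C (R := K) α*PowerSeries.C (R := K) β^2*(X : PowerSeries K)*Qi + (-3)*PowerSeries.C (R := K) α*PowerSeries.C (R := K) β^4*(X : PowerSeries K)^2 + (-1)*PowerSeries.C (R := K) α*PowerSeries.C (R := K) β^4*(X : PowerSeries K)^2*Qi + (-1)*PowerSeries.C (R := K) α^2*PowerSeries.C (R := K) β*(X : PowerSeries K) + (-1)*PowerSeries.C (R := K) α^2*PowerSeries.C (R := K) β*(X : PowerSeries K)*Qi + (3)*PowerSeries.C (R := K) α^2*PowerSeries.C (R := K) β^3*(X : PowerSeries K)^2 + (3)*PowerSeries.C (R := K) α^2*PowerSeries.C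 (R := K) β^3*(X : PowerSeries K)^2*Qi + (-1)*PowerSeries.C (R := K) α^3*PowerSeries.C (R := K) β^2*(X : PowerSeries K)^2 + (-3)*PowerSeries.C (R := K) α^3*PowerSeries.C (R := K) β^2*(X : PowerSeries K)^2*Qi + PowerSeries.C (R := K) α^4*PowerSeries.C (R := K) β*(X : PowerSeries K)^2*Qi) * hQQi'
  -- derivative of partial sums
  have hder : ∀ N : ℕ, (d⁄dX K) (Y * ∑ mm ∈ Finset.range (N+2), PowerSeries.C (R := K) (g mm) * Y^mm)
      = (d⁄dX K) Y * ∑ mm ∈ Finset.range (N+2), PowerSeries.C (R := K) (((mm:K)+1) * g mm) * Y^mm := by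
    intro N
    rw [Derivation.leibniz]
    simp only [smul_eq_mul]
    have h1 : Y * (d⁄dX K) (∑ mm ∈ Finset.range (N+2), PowerSeries.C (R := K) (g mm) * Y^mm)
        = (d⁄dX K) Y * (∑ mm ∈ Finset.range (N+2), PowerSeries.C (R := K) ((mm:K) * g mm) * Y^mm) := by
      rw [map_sum, Finset.mul_sum, Finset.mul_sum]
      refine Finset.sum_congr rfl fun mm hm => ?_
      rw [Derivation.leibniz]
      simp only [smul_eq_mul, derivative_C, mul_zero, add_zero]
      calc Y * (PowerSeries.C (R := K) (g mm) * (d⁄dX K) (Y^mm))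
          = PowerSeries.C (R := K) (g mm) * (Y * (d⁄dX K) (Y^mm)) := by ring
        _ = PowerSeries.C (R := K) (g mm) * (PowerSeries.C (R := K) ((mm:K)) * Y^mm * (d⁄dX K) Y) := by
            rw [pow_deriv]
        _ = (d⁄dX K) Y * (PowerSeries.C (R := K) ((mm:K) * g mm) * Y^mm) := by
            rw [show PowerSeries.C (R := K) ((mm:K) * g mm)
              = PowerSeries.C (R := K) ((mm:K)) * PowerSeries.C (R := K) (g mm) from map_mul _ _ _]
            ring
    rw [h1]
    have h2 : ∑ mm ∈ Finset.range (N+2), PowerSeries.C (R := K) (((mm:K)+1) * g mm) * Y^mm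
        = (∑ mm ∈ Finset.range (N+2), PowerSeries.C (R := K) ((mm:K) * g mm) * Y^mm)
          + ∑ mm ∈ Finset.range (N+2), PowerSeries.C (R := K) (g mm) * Y^mm := by
      rw [← Finset.sum_add_distrib]
      refine Finset.sum_congr rfl fun mm hm => ?_
      have he : ((mm:K)+1) * g mm = (mm:K) * g mm + g mm := by ring
      rw [he, map_add, add_mul]
    rw [h2]
    ring
  -- ODE for partial sums
  have hode_part : ∀ N : ℕ,
      A * (d⁄dX K) (Y * ∑ mm ∈ Finset.range (N+2), PowerSeries.C (R := K) (g mm) * Y^mm)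
        + B * (Y * ∑ mm ∈ Finset.range (N+2), PowerSeries.C (R := K) (g mm) * Y^mm)
      = Cs + (d⁄dX K) Y *
          (PowerSeries.C (R := K) ((α-β)^2*(N:K)*(g N) - (α+β)*(2*(N:K)+3)*(g (N+1))) * Y^(N+2)
            + PowerSeries.C (R := K) ((α-β)^2*((N:K)+1)*(g (N+1))) * Y^(N+3)) := by
    intro N
    rw [hder N, hAdef, hBdef, hCsdef]
    linear_combination ((d⁄dX K) Y) * keylem α β g hg0 hg Y N
  -- the full series
  set Sf : PowerSeries K := PowerSeries.mk (fun k => PowerSeries.coeff (R := K) k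
      (∑ n ∈ Finset.Icc 1 k, W ^ n * PowerSeries.X ^ n * PowerSeries.C (R := K) (g (n - 1)))) with hSfdef
  have hterm0 : ∀ k n : ℕ, k < n →
      PowerSeries.coeff (R := K) k (PowerSeries.C (R := K) (g (n-1)) * Y^n) = 0 := by
    intro k n hkn
    have hre : PowerSeries.C (R := K) (g (n-1)) * Y^n
        = (PowerSeries.C (R := K) (g (n-1)) * W^n) * PowerSeries.X^n := by
      rw [hYdef, mul_pow]; ring
    rw [hre, PowerSeries.coeff_mul_X_pow', if_neg (by omega)]
  have hcoeffSf : ∀ k, PowerSeries.coeff (R := K) k Sf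
      = ∑ n ∈ Finset.Icc 1 k, PowerSeries.coeff (R := K) k (PowerSeries.C (R := K) (g (n-1)) * Y^n) := by
    intro k
    rw [hSfdef, PowerSeries.coeff_mk, map_sum]
    refine Finset.sum_congr rfl fun n hn => ?_
    congr 1
    rw [hYdef, mul_pow]; ring
  have hpartsum : ∀ N : ℕ, Y * (∑ mm ∈ Finset.range (N+2), PowerSeries.C (R := K) (g mm) * Y^mm)
      = ∑ n ∈ Finset.Icc 1 (N+2), PowerSeries.C (R := K) (g (n-1)) * Y^n := by
    intro N
    rw [Finset.mul_sum, ← Finset.Ico_add_one_right_eq_Icc, Finset.sum_Ico_eq_sum_range]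
    rw [show N+2+1-1 = N+2 from rfl]
    refine Finset.sum_congr rfl fun i hi => ?_
    rw [show 1+i-1 = i by omega]
    ring
  have hagree : ∀ N k : ℕ, k ≤ N+2 → PowerSeries.coeff (R := K) k Sf
      = PowerSeries.coeff (R := K) k (Y * ∑ mm ∈ Finset.range (N+2), PowerSeries.C (R := K) (g mm) * Y^mm) := by
    intro N k hk
    rw [hcoeffSf k, hpartsum N, map_sum]
    refine Finset.sum_subset (Finset.Icc_subset_Icc_right hk) fun n hn hn' => ?_
    have hkn : k < n := by
      simp only [Finset.mem_Icc] at hn hn'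
      omega
    exact hterm0 k n hkn
  -- ODE for the full series
  have hF2 : A * (d⁄dX K) Sf + B * Sf = Cs := by
    ext m
    have h1 := coeff_loc A B Sf
      (Y * ∑ mm ∈ Finset.range (m+2), PowerSeries.C (R := K) (g mm) * Y^mm) m
      (fun k hk => hagree m k (by omega))
    rw [h1, hode_part m, map_add]
    have e1 : (d⁄dX K) Y *
        (PowerSeries.C (R := K) ((α-β)^2*(m:K)*(g m) - (α+β)*(2*(m:K)+3)*(g (m+1))) * Y^(m+2)
          + PowerSeries.C (R := K) ((α-β)^2*((m:K)+1)*(g (m+1))) * Y^(m+3))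
        = ((d⁄dX K) Y * PowerSeries.C (R := K) ((α-β)^2*(m:K)*(g m) - (α+β)*(2*(m:K)+3)*(g (m+1)))
            * W^(m+2)) * PowerSeries.X^(m+2)
          + ((d⁄dX K) Y * PowerSeries.C (R := K) ((α-β)^2*((m:K)+1)*(g (m+1)))
            * W^(m+3)) * PowerSeries.X^(m+3) := by
      rw [hYdef, mul_pow, mul_pow]; ring
    rw [e1, map_add, PowerSeries.coeff_mul_X_pow', PowerSeries.coeff_mul_X_pow',
      if_neg (by omega), if_neg (by omega)]
    ring
  -- uniqueness
  have hA0 : PowerSeries.constantCoeff (R := K) A = 1 := by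
    rw [hAdef, hYdef]
    simp
  have hSf0 : PowerSeries.constantCoeff (R := K) Sf = 0 := by
    have h := hcoeffSf 0
    rw [show Finset.Icc 1 0 = (∅ : Finset ℕ) from rfl, Finset.sum_empty] at h
    rw [← PowerSeries.coeff_zero_eq_constantCoeff_apply]
    exact h
  have hT0 : PowerSeries.constantCoeff (R := K) T = 0 := by
    rw [hTdef]
    simp
  have h00 : PowerSeries.constantCoeff (R := K) (Sf - T) = 0 := by
    rw [map_sub, hSf0, hT0, sub_zero]
  have hΔ : A * (d⁄dX K) (Sf - T) + B * (Sf - T) = 0 := by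
    rw [map_sub]
    linear_combination hF2 - hF3
  have hST : Sf = T := sub_eq_zero.mp (ode_unique A B (Sf - T) hA0 h00 hΔ)
  -- conclusion
  have hTR : (PowerSeries.C (R := K) α * Qi - PowerSeries.C (R := K) α) * PowerSeries.C (R := K) (((β-α)*α)⁻¹) = T := by
    have e3 : Qi - 1 = -(PowerSeries.C (R := K) ((α-β)^2) * PowerSeries.X) * Qi := by
      linear_combination hQQi
    have e2 : -(α * (α-β)^2) * ((β-α)*α)⁻¹ = α - β := by
      have hba : (β-α) ≠ 0 := sub_ne_zero.mpr (Ne.symm hαβ)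
      field_simp
      ring
    calc (PowerSeries.C (R := K) α * Qi - PowerSeries.C (R := K) α) * PowerSeries.C (R := K) (((β-α)*α)⁻¹)
        = PowerSeries.C (R := K) α * (Qi - 1) * PowerSeries.C (R := K) (((β-α)*α)⁻¹) := by ring
      _ = PowerSeries.C (R := K) α * (-(PowerSeries.C (R := K) ((α-β)^2) * PowerSeries.X) * Qi)
            * PowerSeries.C (R := K) (((β-α)*α)⁻¹) := by rw [e3]
      _ = PowerSeries.C (R := K) (-(α*(α-β)^2) * ((β-α)*α)⁻¹) * PowerSeries.X * Qi := by
          simp only [map_mul, map_neg]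
          ring
      _ = T := by rw [e2, hTdef]
  intro m
  have hL : PowerSeries.coeff (R := K) m
      (∑ n ∈ Finset.Icc 1 m, W ^ n * PowerSeries.X ^ n * PowerSeries.C (R := K) (g (n - 1)))
      = PowerSeries.coeff (R := K) m Sf := by
    rw [hSfdef, PowerSeries.coeff_mk]
  rw [hL, hST, hTR]
end

section
/- Closed form of G(t): the generating function G(t) = Σ_{n≥0}(α−β)^{n−1} g_n(x) t^n equals [1 + t(x−β)(α−β) − √(1 − 2t(x−β)(α+β) + t²(x−β)²(α−β)²) + 2(x−α)/(α−β)] / [2(x−α + x t(α−β)²)], as formal power series in t, where the square root has constant term 1. -/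
open PowerSeries Finset

namespace Aux15
variable {K : Type*} [Field K]

noncomputable def comp (a : ℕ → K) (q : K⟦X⟧) : K⟦X⟧ :=
  PowerSeries.mk fun m => ∑ n ∈ range (m + 1), a n * coeff m (q ^ n)

lemma coeff_comp (a : ℕ → K) (q : K⟦X⟧) (m : ℕ) :
    coeff m (comp a q) = ∑ n ∈ range (m + 1), a n * coeff m (q ^ n) := by
  simp [comp]

lemma coeff_pow_eq_zero {q : K⟦X⟧} (hq : constantCoeff q = 0) {m n : ℕ} (h : m < n) :
    coeff m (q ^ n) = 0 := by
  have h1 : X ∣ q := X_dvd_iff.2 hq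
  exact (X_pow_dvd_iff.1 (pow_dvd_pow_of_dvd h1 n)) m h

lemma tri (m : ℕ) (F : ℕ → ℕ → K) :
    ∑ n ∈ range (m + 1), ∑ i ∈ range (n + 1), F i (n - i)
      = ∑ i ∈ range (m + 1), ∑ j ∈ range (m + 1 - i), F i j := by
  rw [Finset.sum_sigma', Finset.sum_sigma']
  refine Finset.sum_nbij' (i := fun p => ⟨p.2, p.1 - p.2⟩) (j := fun p => ⟨p.1 + p.2, p.1⟩)
    ?_ ?_ ?_ ?_ ?_
  · rintro ⟨n, i⟩ h
    simp only [Finset.mem_sigma, Finset.mem_range] at h ⊢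
    omega
  · rintro ⟨i, j⟩ h
    simp only [Finset.mem_sigma, Finset.mem_range] at h ⊢
    omega
  · rintro ⟨n, i⟩ h
    simp only [Finset.mem_sigma, Finset.mem_range] at h
    dsimp only
    rw [show i + (n - i) = n from by omega]
  · rintro ⟨i, j⟩ h
    simp only [Finset.mem_sigma, Finset.mem_range] at h
    dsimp only
    rw [show i + j - i = j from by omega]
  · rintro ⟨n, i⟩ h
    rfl

lemma comp_mul (a b : ℕ → K) {q : K⟦X⟧} (hq : constantCoeff q = 0) :
    comp (fun n => ∑ i ∈ range (n + 1), a i * b (n - i)) q = comp a q * comp b q := by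
  ext m
  rw [coeff_mul, coeff_comp]
  have key : ∀ i j : ℕ, a i * b j * coeff m (q ^ (i + j))
      = ∑ p ∈ antidiagonal m, a i * coeff p.1 (q ^ i) * (b j * coeff p.2 (q ^ j)) := by
    intro i j
    rw [pow_add, coeff_mul, Finset.mul_sum]
    exact Finset.sum_congr rfl fun p _ => by ring
  have hL : ∑ n ∈ range (m + 1), (∑ i ∈ range (n + 1), a i * b (n - i)) * coeff m (q ^ n)
      = ∑ i ∈ range (m + 1), ∑ j ∈ range (m + 1), a i * b j * coeff m (q ^ (i + j)) := by
    have h1 : ∀ n ∈ range (m + 1),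
        (∑ i ∈ range (n + 1), a i * b (n - i)) * coeff m (q ^ n)
          = ∑ i ∈ range (n + 1), a i * b (n - i) * coeff m (q ^ (i + (n - i))) := by
      intro n _
      rw [Finset.sum_mul]
      refine Finset.sum_congr rfl fun i hi => ?_
      rw [Nat.add_sub_cancel' (Nat.lt_succ_iff.1 (Finset.mem_range.1 hi))]
    rw [Finset.sum_congr rfl h1, tri m (fun i j => a i * b j * coeff m (q ^ (i + j)))]
    refine Finset.sum_congr rfl fun i hi => ?_
    refine Finset.sum_subset (fun j hj => ?_) (fun j hj hj' => ?_)
    · simp only [Finset.mem_range] at hj ⊢; omega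
    · simp only [Finset.mem_range] at hj hj'
      rw [coeff_pow_eq_zero hq (by omega), mul_zero]
  rw [hL]
  calc ∑ i ∈ range (m + 1), ∑ j ∈ range (m + 1), a i * b j * coeff m (q ^ (i + j))
      = ∑ i ∈ range (m + 1), ∑ j ∈ range (m + 1), ∑ p ∈ antidiagonal m,
          a i * coeff p.1 (q ^ i) * (b j * coeff p.2 (q ^ j)) := by
        exact Finset.sum_congr rfl fun i _ => Finset.sum_congr rfl fun j _ => key i j
    _ = ∑ i ∈ range (m + 1), ∑ p ∈ antidiagonal m, ∑ j ∈ range (m + 1),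
          a i * coeff p.1 (q ^ i) * (b j * coeff p.2 (q ^ j)) :=
        Finset.sum_congr rfl fun i _ => Finset.sum_comm
    _ = ∑ p ∈ antidiagonal m, ∑ i ∈ range (m + 1), ∑ j ∈ range (m + 1),
          a i * coeff p.1 (q ^ i) * (b j * coeff p.2 (q ^ j)) :=
        Finset.sum_comm
    _ = ∑ p ∈ antidiagonal m, (∑ i ∈ range (m + 1), a i * coeff p.1 (q ^ i))
          * (∑ j ∈ range (m + 1), b j * coeff p.2 (q ^ j)) := by
        exact Finset.sum_congr rfl fun p _ => (Finset.sum_mul_sum _ _ _ _).symm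
    _ = ∑ p ∈ antidiagonal m, coeff p.1 (comp a q) * coeff p.2 (comp b q) := by
        refine Finset.sum_congr rfl fun p hp => ?_
        have hp' := Finset.HasAntidiagonal.mem_antidiagonal.1 hp
        rw [coeff_comp, coeff_comp]
        have ea : ∀ (u : ℕ → K) (r s : ℕ), r + s = m → ∑ n ∈ range (r + 1), u n * coeff r (q ^ n)
            = ∑ n ∈ range (m + 1), u n * coeff r (q ^ n) := by
          intro u r s hrs
          refine Finset.sum_subset (fun j hj => ?_) (fun j hj hj' => ?_)
          · simp only [Finset.mem_range] at hj ⊢; omega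
          · simp only [Finset.mem_range] at hj hj'
            rw [coeff_pow_eq_zero hq (by omega), mul_zero]
        rw [ea a p.1 p.2 hp', ea b p.2 p.1 (by omega)]

lemma comp_congr {a b : ℕ → K} (h : ∀ n, a n = b n) (q : K⟦X⟧) : comp a q = comp b q := by
  ext m; simp [coeff_comp, h]

lemma comp_one (q : K⟦X⟧) : comp (fun n => if n = 0 then 1 else 0) q = 1 := by
  ext m
  rw [coeff_comp, Finset.sum_eq_single 0]
  · simp
  · intro n _ hn; simp [hn]
  · simp

lemma comp_add (a b : ℕ → K) (q : K⟦X⟧) :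
    comp (fun n => a n + b n) q = comp a q + comp b q := by
  ext m; simp [coeff_comp, add_mul, Finset.sum_add_distrib]

lemma comp_sub (a b : ℕ → K) (q : K⟦X⟧) :
    comp (fun n => a n - b n) q = comp a q - comp b q := by
  ext m; simp [coeff_comp, sub_mul, Finset.sum_sub_distrib]

lemma comp_smul (e : K) (a : ℕ → K) (q : K⟦X⟧) :
    comp (fun n => e * a n) q = C e * comp a q := by
  ext m; simp [coeff_comp, Finset.mul_sum, mul_assoc]

lemma comp_delta1 {q : K⟦X⟧} (hq : constantCoeff q = 0) :
    comp (fun n => if n = 1 then (1 : K) else 0) q = q := by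
  ext m
  rw [coeff_comp]
  rcases m with _ | m
  · rw [Finset.sum_eq_zero (fun n hn => ?_)]
    · rw [← coeff_zero_eq_constantCoeff] at hq
      rw [hq]
    · simp only [Finset.mem_range] at hn
      interval_cases n <;> simp
  · rw [Finset.sum_eq_single 1]
    · simp
    · intro n _ hn; simp [hn]
    · intro h
      exact absurd (Finset.mem_range.2 (by omega)) h

lemma comp_shift (a : ℕ → K) {q : K⟦X⟧} (hq : constantCoeff q = 0) :
    comp (fun n => match n with | 0 => 0 | k + 1 => a k) q = q * comp a q := by
  have h1 : ∀ n : ℕ, (match n with | 0 => (0 : K) | k + 1 => a k)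
      = ∑ i ∈ range (n + 1), (if i = 1 then (1 : K) else 0) * a (n - i) := by
    intro n
    rcases n with _ | k
    · simp
    · rw [Finset.sum_eq_single 1]
      · simp
      · intro i _ hi; simp [hi]
      · intro h; exact absurd (Finset.mem_range.2 (by omega)) h
  rw [comp_congr h1, comp_mul _ _ hq, comp_delta1 hq]

/-- diagonal sum Σ_n f n * X^n for a sequence of power series -/
noncomputable def Dsum (f : ℕ → K⟦X⟧) : K⟦X⟧ :=
  PowerSeries.mk fun m => ∑ n ∈ range (m + 1), coeff (m - n) (f n)

lemma coeff_Dsum (f : ℕ → K⟦X⟧) (m : ℕ) :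
    coeff m (Dsum f) = ∑ n ∈ range (m + 1), coeff (m - n) (f n) := by
  simp [Dsum]

lemma Dsum_congr {f h : ℕ → K⟦X⟧} (hfh : ∀ n, f n = h n) : Dsum f = Dsum h := by
  ext m; simp [coeff_Dsum, hfh]

lemma Dsum_add (f h : ℕ → K⟦X⟧) : Dsum (fun n => f n + h n) = Dsum f + Dsum h := by
  ext m; simp [coeff_Dsum, Finset.sum_add_distrib]

lemma tri_comm (m : ℕ) (F : ℕ → ℕ → K) :
    ∑ i ∈ range (m + 1), ∑ j ∈ range (m + 1 - i), F i j
      = ∑ j ∈ range (m + 1), ∑ i ∈ range (m + 1 - j), F i j := by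
  rw [← tri m F, ← tri m (fun j i => F i j)]
  refine Finset.sum_congr rfl fun n hn => ?_
  rw [← Finset.sum_range_reflect (fun i => F i (n - i)) (n + 1)]
  refine Finset.sum_congr rfl fun i hi => ?_
  simp only [Finset.mem_range] at hn hi
  congr 1 <;> omega

lemma mul_Dsum (g : K⟦X⟧) (f : ℕ → K⟦X⟧) : g * Dsum f = Dsum (fun n => g * f n) := by
  ext m
  rw [coeff_mul, coeff_Dsum]
  have h1 : ∀ n ∈ range (m + 1), coeff (m - n) (g * f n)
      = ∑ k ∈ range (m + 1 - n), coeff k g * coeff (m - n - k) (f n) := by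
    intro n hn
    simp only [Finset.mem_range] at hn
    rw [coeff_mul, Finset.Nat.sum_antidiagonal_eq_sum_range_succ_mk,
      show (m - n).succ = m + 1 - n from by omega]
  rw [Finset.sum_congr rfl h1]
  have h2 : ∀ p ∈ antidiagonal m, coeff p.1 g * coeff p.2 (Dsum f)
      = ∑ n ∈ range (p.2 + 1), coeff p.1 g * coeff (p.2 - n) (f n) := by
    intro p _
    rw [coeff_Dsum, Finset.mul_sum]
  rw [Finset.sum_congr rfl h2, Finset.Nat.sum_antidiagonal_eq_sum_range_succ_mk]
  rw [tri_comm m (fun n k => coeff k g * coeff (m - n - k) (f n))]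
  refine Finset.sum_congr rfl fun k hk => ?_
  simp only [Finset.mem_range] at hk
  rw [show m - k + 1 = m + 1 - k from by omega]
  refine Finset.sum_congr rfl fun n hn => ?_
  simp only [Finset.mem_range] at hn
  rw [show m - n - k = m - k - n from by omega]

lemma X_mul_Dsum (f : ℕ → K⟦X⟧) :
    X * Dsum f = Dsum (fun n => match n with | 0 => 0 | k + 1 => f k) := by
  ext m
  rcases m with _ | m
  · simp [coeff_Dsum]
  · rw [coeff_succ_X_mul, coeff_Dsum]
    conv_rhs => rw [coeff_Dsum, Finset.sum_range_succ']
    simp [Nat.succ_sub_succ]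

lemma Dsum_single0 (z : K⟦X⟧) : Dsum (fun n => if n = 0 then z else 0) = z := by
  ext m
  rw [coeff_Dsum, Finset.sum_eq_single 0]
  · simp
  · intro n _ hn; simp [hn]
  · simp

lemma comp_X_mul (a : ℕ → K) (v : K⟦X⟧) :
    comp a (X * v) = Dsum (fun n => C (a n) * v ^ n) := by
  ext m
  rw [coeff_comp, coeff_Dsum]
  refine Finset.sum_congr rfl fun n hn => ?_
  simp only [Finset.mem_range] at hn
  conv_lhs => rw [mul_pow, show m = (m - n) + n from by omega]
  rw [coeff_X_pow_mul, coeff_C_mul]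


lemma comp_Q (c : ℕ → K) (hc0 : c 0 = 1) (e a' : K) {q : K⟦X⟧} (hq : constantCoeff q = 0) :
    comp (fun n => match n with
      | 0 => (1 : K)
      | k + 1 => c (k + 1) + e * c k - a' * ∑ i ∈ range (k + 1), c i * c (k - i)) q
      = comp c q + C e * (q * comp c q) - C a' * (q * (comp c q * comp c q)) := by
  have h1 : comp (fun n => match n with | 0 => (0:K) | k + 1 => c k) q = q * comp c q :=
    comp_shift c hq
  have h2 : comp (fun n => ∑ i ∈ range (n + 1), c i * c (n - i)) q = comp c q * comp c q :=
    comp_mul c c hq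
  have h3 : comp (fun n => match n with
      | 0 => (0:K)
      | k + 1 => ∑ i ∈ range (k + 1), c i * c (k - i)) q = q * (comp c q * comp c q) := by
    rw [← h2, comp_shift _ hq]
  have h4 : ∀ n : ℕ, (match n with
      | 0 => (1 : K)
      | k + 1 => c (k + 1) + e * c k - a' * ∑ i ∈ range (k + 1), c i * c (k - i))
      = (c n + e * (match n with | 0 => (0:K) | k + 1 => c k))
        - a' * (match n with
            | 0 => (0:K)
            | k + 1 => ∑ i ∈ range (k + 1), c i * c (k - i)) := by
    intro n
    rcases n with _ | k
    · simp [hc0]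
    · rfl
  rw [comp_congr h4, comp_sub, comp_add, comp_smul, comp_smul, h1, h3]

lemma conv_lemma (α β : K) (hαβ : α ≠ β) (g : ℕ → Polynomial K) (hg0 : g 0 = 1)
    (hrec : ∀ n : ℕ, 1 ≤ n →
      (Polynomial.X - Polynomial.C α) * Polynomial.C ((α - β) ^ (n - 1)) * g n =
        Polynomial.C α * (Polynomial.X - Polynomial.C β) ^ n *
          Polynomial.C ((g (n - 1)).eval α) -
          Polynomial.X * Polynomial.C ((α - β) ^ n) * g (n - 1)) :
    ∀ n : ℕ, (fun n => match n with
      | 0 => (1 : K)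
      | k + 1 => (g (k + 1)).eval α + (α - β) * (g k).eval α
          - α * ∑ i ∈ range (k + 1), (g i).eval α * (g (k - i)).eval α) n
      = (if n = 0 then 1 else 0) := by
  have hd : α - β ≠ 0 := sub_ne_zero.2 hαβ
  set c : ℕ → K := fun n => (g n).eval α with hc
  have hc0 : c 0 = 1 := by simp [hc, hg0]
  by_cases hα : α = 0
  · -- degenerate case
    subst hα
    have hstep : ∀ k : ℕ, (g (k + 1)).eval 0 + (0 - β) * (g k).eval 0 = 0 := by
      intro k
      have h := hrec (k + 1) (by omega)
      simp only [map_zero, sub_zero, zero_mul, Nat.add_sub_cancel] at h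
      have h2 : Polynomial.X * (Polynomial.C ((0 - β) ^ k) * g (k + 1)
          + Polynomial.C ((0 - β) ^ (k + 1)) * g k) = 0 := by
        linear_combination h
      have h3 : Polynomial.C ((0 - β) ^ k) * g (k + 1)
          + Polynomial.C ((0 - β) ^ (k + 1)) * g k = 0 :=
        (mul_eq_zero.1 h2).resolve_left Polynomial.X_ne_zero
      have h4 := congrArg (Polynomial.eval (0 : K)) h3
      simp only [Polynomial.eval_add, Polynomial.eval_mul, Polynomial.eval_C,
        Polynomial.eval_zero] at h4
      have h5 : (0 - β) ^ k * ((g (k + 1)).eval 0 + (0 - β) * (g k).eval 0) = 0 := by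
        linear_combination h4
      exact (mul_eq_zero.1 h5).resolve_left (pow_ne_zero k hd)
    intro n
    rcases n with _ | k
    · simp
    · simp only [if_neg (by omega : ¬ k + 1 = 0)]
      have := hstep k
      linear_combination this
  · -- main case
    have hA0 : constantCoeff (1 + (C α - C β) ^ 2 * X) = 1 := by simp
    have hAne : (1 + (C α - C β) ^ 2 * X : K⟦X⟧) ≠ 0 := by
      intro h
      rw [h] at hA0
      simp at hA0
    obtain ⟨y0, hAy0⟩ : ∃ y : K⟦X⟧, (1 + (C α - C β) ^ 2 * X) * y = C α :=
      ⟨C α * (1 + (C α - C β) ^ 2 * X)⁻¹, by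
        rw [mul_comm (C α), ← mul_assoc,
          PowerSeries.mul_inv_cancel _ (by rw [hA0]; norm_num), one_mul]⟩
    have hccy0 : constantCoeff y0 = α := by
      have h := congrArg (constantCoeff) hAy0
      simp only [map_mul, hA0, one_mul] at h
      simpa using h
    have halg : ∀ r : K, (algebraMap K K⟦X⟧) r = C r := fun _ => rfl
    have hker : (y0 - C α) + y0 * (C α - C β) ^ 2 * X = 0 := by
      refine mul_left_cancel₀ hAne ?_
      rw [mul_zero]
      linear_combination (1 + (C α - C β) ^ 2 * X) * hAy0
    have hmaster : (0 : K⟦X⟧) = (y0 - C α)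
        + (C α * (C α - C β)) * ((X * (y0 - C β)) * comp c (X * (y0 - C β))) := by
      have hz : ((y0 - C α) + y0 * (C α - C β) ^ 2 * X)
          * Dsum (fun n => (C α - C β) ^ n * Polynomial.aeval y0 (g n)) = 0 := by
        rw [hker, zero_mul]
      have hexp : ((y0 - C α) + y0 * (C α - C β) ^ 2 * X)
            * Dsum (fun n => (C α - C β) ^ n * Polynomial.aeval y0 (g n))
          = (y0 - C α) * Dsum (fun n => (C α - C β) ^ n * Polynomial.aeval y0 (g n))
            + (y0 * (C α - C β) ^ 2)
              * (X * Dsum (fun n => (C α - C β) ^ n * Polynomial.aeval y0 (g n))) := by ring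
      rw [hexp, X_mul_Dsum, mul_Dsum, mul_Dsum, ← Dsum_add] at hz
      have hper : ∀ n : ℕ, (y0 - C α) * ((C α - C β) ^ n * Polynomial.aeval y0 (g n))
          + (y0 * (C α - C β) ^ 2) * (match n with
              | 0 => 0
              | k + 1 => (C α - C β) ^ k * Polynomial.aeval y0 (g k))
          = (match n with
             | 0 => y0 - C α
             | k + 1 => ((y0 - C β) * (C α * (C α - C β)))
                 * (C (c k) * (y0 - C β) ^ k)) := by
        intro n
        rcases n with _ | k
        · simp only [hg0, map_one, mul_one, pow_zero]
          ring
        · have hek := congrArg (Polynomial.aeval (R := K) y0) (hrec (k + 1) (by omega))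
          simp only [map_mul, map_sub, map_pow, Polynomial.aeval_X, Polynomial.aeval_C,
            Nat.add_sub_cancel, halg] at hek
          show (y0 - C α) * ((C α - C β) ^ (k + 1) * Polynomial.aeval y0 (g (k + 1)))
              + (y0 * (C α - C β) ^ 2)
                * ((C α - C β) ^ k * Polynomial.aeval y0 (g k)) = _
          simp only [hc]
          linear_combination ((C α - C β)) * hek
      rw [Dsum_congr hper] at hz
      have hsplit : (fun n : ℕ => (match n with
             | 0 => y0 - C α
             | k + 1 => ((y0 - C β) * (C α * (C α - C β)))
                 * (C (c k) * (y0 - C β) ^ k)))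
          = fun n => (if n = 0 then y0 - C α else 0)
            + (match n with
               | 0 => (0 : K⟦X⟧)
               | k + 1 => ((y0 - C β) * (C α * (C α - C β)))
                   * (C (c k) * (y0 - C β) ^ k)) := by
        funext n
        rcases n with _ | k <;> simp
      rw [hsplit, Dsum_add, Dsum_single0, ← X_mul_Dsum, ← mul_Dsum, ← comp_X_mul] at hz
      rw [← hz]
      ring
    -- Step A conclusion
    have hY : (1 - C β * (C α - C β) * X) * comp c (X * (y0 - C β)) = 1 := by
      have hmul := congrArg (fun z => (1 + (C α - C β) ^ 2 * X) * z) hmaster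
      simp only [mul_zero] at hmul
      have hy0b : (1 + (C α - C β) ^ 2 * X) * (y0 - C β)
          = (C α - C β) * (1 - C β * (C α - C β) * X) := by
        linear_combination hAy0
      have hy0a : (1 + (C α - C β) ^ 2 * X) * (y0 - C α)
          = - (C α * (C α - C β) ^ 2 * X) := by
        linear_combination hAy0
      have hz2 : C α * (C α - C β) ^ 2 * X *
          ((1 - C β * (C α - C β) * X) * comp c (X * (y0 - C β)) - 1) = 0 := by
        linear_combination (-1 : K⟦X⟧) * hmul
          - (C α * (C α - C β) * X * comp c (X * (y0 - C β))) * hy0b - hy0a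
      have hCne : (C α * (C α - C β) ^ 2 : K⟦X⟧) ≠ 0 := by
        intro h
        have h2 := congrArg (constantCoeff) h
        simp only [map_mul, map_pow, map_sub, constantCoeff_C, map_zero] at h2
        exact (mul_ne_zero hα (pow_ne_zero 2 hd)) h2
      rcases mul_eq_zero.1 hz2 with h | h
      · rcases mul_eq_zero.1 h with h' | h'
        · exact absurd h' hCne
        · exact absurd h' X_ne_zero
      · exact sub_eq_zero.1 h
    -- Step B : comp Q s = 1
    have hq0 : constantCoeff (X * (y0 - C β)) = 0 := by simp
    have hQs : comp (fun n => match n with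
        | 0 => (1 : K)
        | k + 1 => c (k + 1) + (α - β) * c k
            - α * ∑ i ∈ range (k + 1), c i * c (k - i)) (X * (y0 - C β)) = 1 := by
      rw [comp_Q c hc0 (α - β) α hq0]
      have hABne : ((1 + (C α - C β) ^ 2 * X)
          * (1 - C β * (C α - C β) * X) ^ 2 : K⟦X⟧) ≠ 0 := by
        intro h
        have h2 := congrArg (constantCoeff) h
        simp at h2
      refine mul_left_cancel₀ hABne ?_
      have hy0b : (1 + (C α - C β) ^ 2 * X) * (y0 - C β)
          = (C α - C β) * (1 - C β * (C α - C β) * X) := by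
        linear_combination hAy0
      have hCd : C (α - β) = C α - C β := by rw [map_sub]
      have hCa : C α = C α := rfl
      rw [hCd]
      linear_combination
        ((1 + (C α - C β) ^ 2 * X) * (1 - C β * (C α - C β) * X)
          + (C α - C β) ^ 2 * X * (1 - C β * (C α - C β) * X) ^ 2
          - C α * X * (C α - C β)
            * ((1 - C β * (C α - C β) * X)
              + (1 - C β * (C α - C β) * X) ^ 2 * comp c (X * (y0 - C β)))) * hY
        + ((C α - C β) * X * (1 - C β * (C α - C β) * X) ^ 2
              * comp c (X * (y0 - C β))
            - C α * X * (1 - C β * (C α - C β) * X) ^ 2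
              * comp c (X * (y0 - C β)) ^ 2) * hy0b
    -- Step C : extract coefficients
    intro n
    induction n using Nat.strong_induction_on with
    | _ n ih =>
      rcases n with _ | m
      · simp
      · have hco := congrArg (coeff (m + 1)) hQs
        rw [coeff_comp] at hco
        rw [Finset.sum_eq_single (m + 1)] at hco
        · have hpow : coeff (m + 1) ((X * (y0 - C β)) ^ (m + 1))
              = (α - β) ^ (m + 1) := by
            have hXpow : ∀ (z : K⟦X⟧), coeff (m+1) (X ^ (m+1) * z) = constantCoeff z := by
              intro z
              simpa using coeff_X_pow_mul z (m+1) 0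
            rw [mul_pow, hXpow, map_pow, map_sub, hccy0, constantCoeff_C]
          rw [hpow, PowerSeries.coeff_one, if_neg (by omega : ¬ m + 1 = 0)] at hco
          have := (mul_eq_zero.1 hco).resolve_right (pow_ne_zero (m + 1) hd)
          simpa [hc, if_neg (Nat.succ_ne_zero m)] using this
        · intro b hb hbne
          rcases b with _ | k
          · have : coeff (m + 1) ((X * (y0 - C β)) ^ 0) = 0 := by
              rw [pow_zero, PowerSeries.coeff_one, if_neg (by omega : ¬ m + 1 = 0)]
            rw [this, mul_zero]
          · have hk : k + 1 < m + 1 := by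
              simp only [Finset.mem_range] at hb
              omega
            have h5 := ih (k + 1) hk
            dsimp only at h5 ⊢
            rw [h5, if_neg (Nat.succ_ne_zero k), zero_mul]
        · intro h
          exact absurd (Finset.mem_range.2 (by omega)) h

lemma coeff_self_X_pow_mul (z : K⟦X⟧) (n : ℕ) :
    coeff n (X ^ n * z) = constantCoeff z := by
  simpa using coeff_X_pow_mul z n 0


end Aux15

open PowerSeries Finset Aux15


theorem stmt15 {K : Type*} [Field K] [CharZero K] (α β x : K) (hαβ : α ≠ β) (hxα : x ≠ α)
    (g : ℕ → Polynomial K) (hg0 : g 0 = 1)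
    (hrec : ∀ n : ℕ, 1 ≤ n →
      (Polynomial.X - Polynomial.C α) * Polynomial.C ((α - β) ^ (n - 1)) * g n =
        Polynomial.C α * (Polynomial.X - Polynomial.C β) ^ n * Polynomial.C ((g (n - 1)).eval α) -
          Polynomial.X * Polynomial.C ((α - β) ^ n) * g (n - 1))
    (S : PowerSeries K) (hS0 : PowerSeries.coeff 0 S = 1)
    (hS : S ^ 2 = 1 - PowerSeries.C (2 * (x - β) * (α + β)) * PowerSeries.X +
      PowerSeries.C ((x - β) ^ 2 * (α - β) ^ 2) * PowerSeries.X ^ 2) :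
    PowerSeries.mk (fun n => (α - β) ^ ((n : ℤ) - 1) * (g n).eval x) =
      (1 + PowerSeries.C ((x - β) * (α - β)) * PowerSeries.X - S +
          PowerSeries.C (2 * (x - α) / (α - β))) *
        (PowerSeries.C (2 * (x - α)) +
          PowerSeries.C (2 * x * (α - β) ^ 2) * PowerSeries.X)⁻¹ := by
  have hd : α - β ≠ 0 := sub_ne_zero.2 hαβ
  have hxa : x - α ≠ 0 := sub_ne_zero.2 hxα
  have hq0 : constantCoeff (X * C (x - β)) = 0 := by simp
  have hc0 : ((g 0).eval α : K) = 1 := by rw [hg0]; simp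
  have hQdelta := conv_lemma α β hαβ g hg0 hrec
  -- the quadratic identity for Y
  have hId : comp (fun n => (g n).eval α) (X * C (x - β))
      + C (α - β) * ((X * C (x - β)) * comp (fun n => (g n).eval α) (X * C (x - β)))
      - C α * ((X * C (x - β)) * (comp (fun n => (g n).eval α) (X * C (x - β))
          * comp (fun n => (g n).eval α) (X * C (x - β)))) = 1 := by
    rw [← comp_Q (fun n => (g n).eval α) hc0 (α - β) α hq0]
    exact (comp_congr (fun n => hQdelta n) _).trans (comp_one _)
  -- coefficients of Y
  have hcoY : ∀ m : ℕ, coeff m (comp (fun n => (g n).eval α) (X * C (x - β)))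
      = (g m).eval α * (x - β) ^ m := by
    intro m
    rw [coeff_comp, Finset.sum_eq_single m]
    · rw [mul_pow, coeff_self_X_pow_mul, ← map_pow, constantCoeff_C]
    · intro b hb hbne
      simp only [Finset.mem_range] at hb
      have hblt : b < m := by omega
      rw [mul_pow, show m = (m - b) + b from by omega, coeff_X_pow_mul, ← map_pow, coeff_C,
        if_neg (by omega : ¬ m - b = 0), mul_zero]
    · intro h
      exact absurd (Finset.mem_range.2 (by omega)) h
  -- the square root candidate
  set V : K⟦X⟧ := 1 + C ((x - β) * (α - β)) * X
      - C (2 * α) * (X * (C (x - β) * comp (fun n => (g n).eval α) (X * C (x - β))))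
    with hV
  have hV2 : V ^ 2 = 1 - C (2 * (x - β) * (α + β)) * X
      + C ((x - β) ^ 2 * (α - β) ^ 2) * X ^ 2 := by
    rw [hV]
    simp only [map_mul, map_sub, map_add, map_pow, map_ofNat]
    simp only [map_sub] at hId
    linear_combination (-(4 : K⟦X⟧) * C α * (X * (C x - C β))) * hId
  have hSV : S = V := by
    have hfac : (S - V) * (S + V) = 0 := by linear_combination hS - hV2
    rcases mul_eq_zero.1 hfac with h | h
    · exact sub_eq_zero.1 h
    · exfalso
      have h2 := congrArg (coeff 0) h
      have hV0 : coeff 0 V = 1 := by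
        rw [hV]
        simp [mul_comm]
      rw [map_add, hS0, hV0, map_zero] at h2
      norm_num at h2
  have hD0 : constantCoeff (C (2 * (x - α)) + C (2 * x * (α - β) ^ 2) * X) ≠ 0 := by
    simp only [map_add, map_mul, constantCoeff_C, constantCoeff_X, mul_zero, add_zero]
    exact mul_ne_zero two_ne_zero hxa
  rw [PowerSeries.eq_mul_inv_iff_mul_eq hD0, hSV, hV]
  ext n
  have hzp : ∀ k : ℕ, (α - β) ^ ((k : ℤ) - 1) = (α - β) ^ k / (α - β) := by
    intro k
    rw [zpow_sub₀ hd, zpow_natCast, zpow_one]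
  rcases n with _ | k
  · rw [coeff_mul]
    simp only [Finset.Nat.sum_antidiagonal_eq_sum_range_succ_mk]
    simp only [Finset.range_one, Finset.sum_singleton]
    simp only [coeff_mk, coeff_zero_eq_constantCoeff, map_add, map_mul, map_sub, map_one,
      constantCoeff_C, constantCoeff_X, mul_zero, add_zero, hg0, Polynomial.eval_one]
    rw [hzp 0]
    have h0 : coeff 0 (C (2 * α) * (X * (C (x - β)
        * comp (fun n => (g n).eval α) (X * C (x - β))))) = 0 := by
      rw [coeff_zero_eq_constantCoeff]
      simp
    rw [coeff_zero_eq_constantCoeff] at h0 ⊢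
    simp only [map_add, map_sub, map_mul, map_one, constantCoeff_C, constantCoeff_X,
      mul_zero, add_zero, zero_mul, Nat.cast_zero] at h0 ⊢
    field_simp
    ring
  · -- coefficient k+1
    have hLexp : PowerSeries.mk (fun n => (α - β) ^ ((n : ℤ) - 1) * (g n).eval x)
        * (C (2 * (x - α)) + C (2 * x * (α - β) ^ 2) * X)
        = C (2 * (x - α)) * PowerSeries.mk (fun n => (α - β) ^ ((n : ℤ) - 1) * (g n).eval x)
          + C (2 * x * (α - β) ^ 2)
            * (X * PowerSeries.mk (fun n => (α - β) ^ ((n : ℤ) - 1) * (g n).eval x)) := by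
      ring
    rw [hLexp]
    have hev := congrArg (Polynomial.eval x) (hrec (k + 1) (by omega))
    simp only [Polynomial.eval_mul, Polynomial.eval_sub, Polynomial.eval_pow,
      Polynomial.eval_X, Polynomial.eval_C, Nat.add_sub_cancel] at hev
    have hzp1 : (α - β) ^ (((k + 1 : ℕ) : ℤ) - 1) = (α - β) ^ k := by
      rw [show ((k + 1 : ℕ) : ℤ) - 1 = (k : ℤ) from by push_cast; ring, zpow_natCast]
    have hCw : (C x - C β : K⟦X⟧) = C (x - β) := by rw [map_sub]
    have hsplitw : ∀ m : ℕ, coeff m ((C x - C β)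
        * comp (fun n => (g n).eval α) (X * (C x - C β)))
        = (x - β) * ((g m).eval α * (x - β) ^ m) := by
      intro m
      rw [hCw, coeff_C_mul, hcoY]
    simp only [map_add, map_sub, map_one, coeff_one, coeff_C_mul, coeff_succ_X_mul,
      coeff_X, coeff_C, coeff_mk, hcoY, hsplitw, Nat.succ_ne_zero, if_false, ite_false]
    rw [hzp1, hzp k]
    field_simp
    linear_combination 2 * hev
end
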